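/- arXiv:1403.2378 — 2 statements merged into one kernel-verified Lean document; each statement's English description precedes it below -/
import Mathlib

section
/- Fix β > 0. There is a constant C such that for every integer n > 1 and every continuous function f : ℝ → ℂ with f(x) → 0 as |x| → ∞, the rational interpolant R_nf and its derivative (R_nf)′ belong to L²(ℝ) and ( ∫_ℝ |R_nf(x)|² dx + ∫_ℝ |(R_nf)′(x)|² dx )^{1/2} ≤ C n^{3/2} sup_{x∈ℝ} |f(x)|. Consequently there is a constant C₁ such that for every f in the Sobolev space H¹(ℝ), ‖R_nf‖_{H¹(ℝ)} ≤ C₁ n^{3/2} ‖f‖_{H¹(ℝ)}. -/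
set_option linter.unusedSectionVars false


open MeasureTheory Complex Filter

/-- The Möbius map `M_β(x) = (x - iβ)/(x + iβ)` for real `x`. -/
noncomputable def Mob (β : ℝ) (x : ℝ) : ℂ :=
  ((x : ℂ) - Complex.I * β) / ((x : ℂ) + Complex.I * β)

/-- The change of variables `T(θ) = -β cot(θ/2)` mapping `(0, 2π)` onto `ℝ`. -/
noncomputable def Tmap (β : ℝ) (θ : ℝ) : ℝ :=
  -β * (Real.cos (θ / 2) / Real.sin (θ / 2))

/-- Discrete Fourier coefficients `F̃_k = (1/n) ∑_{ℓ=0}^{n-1} e^{-ikθ_ℓ} F(θ_ℓ)`. -/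
noncomputable def dftCoeff (n : ℕ) (F : ℝ → ℂ) (k : ℤ) : ℂ :=
  (n : ℂ)⁻¹ * ∑ ℓ ∈ Finset.range n,
    Complex.exp (-Complex.I * (k : ℂ) * ((2 * Real.pi * ℓ / n : ℝ) : ℂ)) *
      F (2 * Real.pi * ℓ / n)

/-- The rational interpolant `R_n f(x) = ∑_{k=-n₋}^{n₊} F̃_k (M_β(x)^k − 1)`. -/
noncomputable def ratInterp (β : ℝ) (n : ℕ) (F : ℝ → ℂ) (x : ℝ) : ℂ :=
  ∑ k ∈ Finset.Icc (-(((n - 1) / 2 : ℕ) : ℤ)) ((n / 2 : ℕ) : ℤ),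
    dftCoeff n F k * (Mob β x ^ k - 1)

/-- The `H¹(ℝ)` norm `(‖g‖²_{L²} + ‖g′‖²_{L²})^{1/2}`. -/
noncomputable def H1norm (g : ℝ → ℂ) : ℝ :=
  ((∫ x : ℝ, ‖g x‖ ^ 2) + ∫ x : ℝ, ‖deriv g x‖ ^ 2) ^ ((1 : ℝ) / 2)

namespace RatH1

noncomputable def Dfun (β : ℝ) (x : ℝ) : ℂ := 2 * Complex.I * β / ((x : ℂ) + Complex.I * β) ^ 2

variable {β : ℝ} (hβ : 0 < β)
include hβ

lemma denom_ne_zero (x : ℝ) : ((x : ℂ) + Complex.I * β) ≠ 0 := by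
  intro h
  have := congrArg Complex.im h
  simp at this
  exact hβ.ne' this

lemma numer_ne_zero (x : ℝ) : ((x : ℂ) - Complex.I * β) ≠ 0 := by
  intro h
  have := congrArg Complex.im h
  simp at this
  exact hβ.ne' this

lemma mob_ne_zero (x : ℝ) : Mob β x ≠ 0 :=
  div_ne_zero (numer_ne_zero hβ x) (denom_ne_zero hβ x)

lemma conj_mob (x : ℝ) : (starRingEnd ℂ) (Mob β x) = (Mob β x)⁻¹ := by
  unfold Mob
  rw [map_div₀, map_sub, map_add, map_mul, Complex.conj_ofReal, Complex.conj_ofReal, Complex.conj_I]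
  rw [inv_div]
  ring_nf

lemma norm_mob (x : ℝ) : ‖Mob β x‖ = 1 := by
  have h1 : ‖Mob β x‖ ^ 2 = 1 := by
    have := conj_mob hβ (β := β) x
    have h2 : Complex.normSq (Mob β x) = 1 := by
      have h3 : (Mob β x) * (starRingEnd ℂ) (Mob β x) = 1 := by
        rw [this]; exact mul_inv_cancel₀ (mob_ne_zero hβ x)
      have := Complex.mul_conj (Mob β x)
      rw [this] at h3
      exact_mod_cast h3
    rw [Complex.normSq_eq_norm_sq] at h2
    exact h2
  nlinarith [norm_nonneg (Mob β x)]

end RatH1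

namespace RatH1x
open RatH1
variable {β : ℝ} (hβ : 0 < β)
include hβ

lemma hasDerivAt_mob (x : ℝ) : HasDerivAt (fun y : ℝ => Mob β y) (Dfun β x) x := by
  have h1 : HasDerivAt (fun z : ℂ => (z - Complex.I * β) / (z + Complex.I * β))
      (Dfun β x) (x : ℂ) := by
    have hd : HasDerivAt (fun z : ℂ => z - Complex.I * β) 1 (x : ℂ) :=
      (hasDerivAt_id _).sub_const _
    have hd2 : HasDerivAt (fun z : ℂ => z + Complex.I * β) 1 (x : ℂ) :=
      (hasDerivAt_id _).add_const _
    have := hd.div hd2 (RatH1.denom_ne_zero hβ x)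
    refine this.congr_deriv ?_
    unfold Dfun
    field_simp
    ring
  exact h1.comp_ofReal

lemma norm_Dfun (x : ℝ) : ‖Dfun β x‖ = 2 * β / (x ^ 2 + β ^ 2) := by
  unfold Dfun
  rw [norm_div, norm_pow]
  have h1 : ‖2 * Complex.I * β‖ = 2 * β := by
    simp [norm_mul, Complex.norm_real, abs_of_pos hβ]
  have h2 : ‖(x : ℂ) + Complex.I * β‖ ^ 2 = x ^ 2 + β ^ 2 := by
    rw [Complex.sq_norm]
    simp [Complex.normSq_apply]
    ring
  rw [h1, h2]

lemma continuous_Dfun : Continuous (Dfun β) := by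
  apply Continuous.div
  · continuity
  · continuity
  · intro x
    exact pow_ne_zero 2 (denom_ne_zero hβ x)

lemma continuous_mob : Continuous (Mob β) := by
  apply Continuous.div
  · continuity
  · continuity
  · intro x
    exact denom_ne_zero hβ x

lemma continuous_mob_zpow (j : ℤ) : Continuous (fun x : ℝ => Mob β x ^ j) :=
  (continuous_mob hβ).zpow₀ j (fun x => Or.inl (mob_ne_zero hβ x))

lemma integrable_base : Integrable (fun x : ℝ => (x ^ 2 + β ^ 2)⁻¹) := by
  have c : max 1 (β ^ 2)⁻¹ > 0 := lt_max_of_lt_left one_pos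
  apply Integrable.mono' (integrable_inv_one_add_sq.const_mul (max 1 (β ^ 2)⁻¹))
  · exact (Continuous.aestronglyMeasurable (by
      apply Continuous.inv₀ (by continuity)
      intro x; positivity))
  · refine Filter.Eventually.of_forall fun x => ?_
    have hpos : (0:ℝ) < x ^ 2 + β ^ 2 := by positivity
    rw [Real.norm_eq_abs, abs_of_pos (by positivity)]
    rcases le_total 1 (β ^ 2) with h | h
    · have : (1 + x ^ 2) ≤ x ^ 2 + β ^ 2 := by nlinarith
      calc (x ^ 2 + β ^ 2)⁻¹ ≤ (1 + x ^ 2)⁻¹ := by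
            apply inv_anti₀ (by positivity) this
        _ ≤ max 1 (β ^ 2)⁻¹ * (1 + x ^ 2)⁻¹ := by
            nlinarith [le_max_left 1 (β^2)⁻¹, inv_nonneg.mpr (le_of_lt (show (0:ℝ) < 1 + x^2 by positivity))]
    · have hβ2 : (0:ℝ) < β ^ 2 := by positivity
      have : β ^ 2 * (1 + x ^ 2) ≤ x ^ 2 + β ^ 2 := by nlinarith
      calc (x ^ 2 + β ^ 2)⁻¹ ≤ (β ^ 2 * (1 + x ^ 2))⁻¹ := by
            apply inv_anti₀ (by positivity) this
        _ = (β ^ 2)⁻¹ * (1 + x ^ 2)⁻¹ := by rw [mul_inv]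
        _ ≤ max 1 (β ^ 2)⁻¹ * (1 + x ^ 2)⁻¹ := by
            apply mul_le_mul_of_nonneg_right (le_max_right _ _) (by positivity)

lemma integrable_zpow_mul_D (j : ℤ) :
    Integrable (fun x : ℝ => Mob β x ^ j * Dfun β x) := by
  apply Integrable.mono' ((integrable_base hβ).const_mul (2 * β))
  · exact (Continuous.mul (continuous_mob_zpow hβ j) (continuous_Dfun hβ)).aestronglyMeasurable
  · refine Filter.Eventually.of_forall fun x => ?_
    rw [norm_mul, norm_zpow, norm_mob hβ, one_zpow, one_mul, norm_Dfun hβ]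
    rw [div_eq_mul_inv]

lemma tendsto_mob_aux {l : Filter ℝ} (hl : Tendsto (fun x : ℝ => |x|) l atTop) :
    Tendsto (fun x : ℝ => Mob β x) l (nhds 1) := by
  have h0 : Tendsto (fun x : ℝ => 2 * β / |x|) l (nhds 0) :=
    Tendsto.div_atTop tendsto_const_nhds hl
  have hsub : Tendsto (fun x : ℝ => Mob β x - 1) l (nhds 0) := by
    apply squeeze_zero_norm' _ h0
    filter_upwards [hl.eventually_ge_atTop 1] with x hx
    have hx0 : (0:ℝ) < |x| := lt_of_lt_of_le one_pos hx
    have heq : Mob β x - 1 = -(2 * Complex.I * β) / ((x:ℂ) + Complex.I * β) := by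
      unfold Mob
      field_simp [denom_ne_zero hβ x]
      ring
    rw [heq, norm_div, norm_neg]
    have h1 : ‖2 * Complex.I * (β:ℂ)‖ = 2 * β := by
      simp [norm_mul, Complex.norm_real, abs_of_pos hβ]
    rw [h1]
    apply div_le_div_of_nonneg_left (by positivity) hx0
    have := Complex.abs_re_le_norm ((x:ℂ) + Complex.I * β)
    simpa using this
  have := hsub.add_const 1
  simpa using this

lemma tendsto_mob_atTop : Tendsto (fun x : ℝ => Mob β x) atTop (nhds 1) :=
  tendsto_mob_aux hβ tendsto_abs_atTop_atTop

lemma tendsto_mob_atBot : Tendsto (fun x : ℝ => Mob β x) atBot (nhds 1) :=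
  tendsto_mob_aux hβ tendsto_abs_atBot_atTop

end RatH1x

namespace B
open RatH1 RatH1x
variable {β : ℝ} (hβ : 0 < β)

noncomputable def Bint (β : ℝ) (j : ℤ) : ℂ := ∫ x : ℝ, Mob β x ^ j * Dfun β x

include hβ

lemma hasDerivAt_mob_zpow (m : ℤ) (x : ℝ) :
    HasDerivAt (fun y : ℝ => Mob β y ^ m) ((m : ℂ) * Mob β x ^ (m - 1) * Dfun β x) x := by
  have h1 : HasDerivAt (fun z : ℂ => z ^ m) ((m : ℂ) * (Mob β x) ^ (m - 1)) (Mob β x) :=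
    hasDerivAt_zpow m _ (Or.inl (mob_ne_zero hβ x))
  exact h1.comp x (hasDerivAt_mob hβ x)

lemma tendsto_mob_zpow_atTop (m : ℤ) :
    Tendsto (fun x : ℝ => Mob β x ^ m) atTop (nhds 1) := by
  have h := ((continuousAt_zpow₀ (1 : ℂ) m (Or.inl one_ne_zero)).tendsto).comp
    (tendsto_mob_atTop hβ)
  simpa [Function.comp_def] using h

lemma tendsto_mob_zpow_atBot (m : ℤ) :
    Tendsto (fun x : ℝ => Mob β x ^ m) atBot (nhds 1) := by
  have h := ((continuousAt_zpow₀ (1 : ℂ) m (Or.inl one_ne_zero)).tendsto).comp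
    (tendsto_mob_atBot hβ)
  simpa [Function.comp_def] using h

lemma Bint_eq_zero {j : ℤ} (hj : j ≠ -1) : Bint β j = 0 := by
  have hj1 : (j : ℂ) + 1 ≠ 0 := by
    have h2 : ((j + 1 : ℤ) : ℂ) ≠ 0 := Int.cast_ne_zero.mpr (by omega)
    push_cast at h2
    exact h2
  have hg : ∀ x : ℝ, HasDerivAt (fun y : ℝ => ((j:ℂ) + 1)⁻¹ * Mob β y ^ (j + 1))
      (Mob β x ^ j * Dfun β x) x := by
    intro x
    have h := (hasDerivAt_mob_zpow hβ (j + 1) x).const_mul (((j:ℂ) + 1)⁻¹)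
    refine h.congr_deriv ?_
    have hcast : ((j + 1 : ℤ) : ℂ) = (j : ℂ) + 1 := by push_cast; ring
    rw [hcast]
    have hsimp : j + 1 - 1 = j := by ring
    rw [hsimp]
    field_simp
  have hbot : Tendsto (fun y : ℝ => ((j:ℂ) + 1)⁻¹ * Mob β y ^ (j + 1)) atBot
      (nhds (((j:ℂ) + 1)⁻¹)) := by
    have := (tendsto_mob_zpow_atBot hβ (j + 1)).const_mul (((j:ℂ) + 1)⁻¹)
    simpa using this
  have htop : Tendsto (fun y : ℝ => ((j:ℂ) + 1)⁻¹ * Mob β y ^ (j + 1)) atTop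
      (nhds (((j:ℂ) + 1)⁻¹)) := by
    have := (tendsto_mob_zpow_atTop hβ (j + 1)).const_mul (((j:ℂ) + 1)⁻¹)
    simpa using this
  have key := MeasureTheory.integral_of_hasDerivAt_of_tendsto hg
    (integrable_zpow_mul_D hβ j) hbot htop
  unfold Bint
  rw [key]
  ring

end B

namespace P
open RatH1 RatH1x B
variable {β : ℝ} (hβ : 0 < β)
include hβ

omit hβ in
lemma absDconjD (d e ι b : ℂ) (hd : d ≠ 0) (he : e ≠ 0) (hb : b ≠ 0) (h2 : ι^2 = -1)
    (hde : d - e = 2*ι*b) :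
    (2*ι*b/d^2) * (-(2*ι*b)/e^2) = (ι/(2*b)) * (((d/e)*(d/e) - 2*(d/e) + 1) * (2*ι*b/d^2)) := by
  have h1 : (d/e)*(d/e) - 2*(d/e) + 1 = ((d - e)/e)^2 := by
    field_simp
    ring
  rw [h1, hde]
  rw [div_pow, div_mul_div_comm, div_mul_div_comm, div_mul_div_comm]
  rw [div_eq_div_iff (by simp [hd, he, pow_ne_zero]) (by
    exact mul_ne_zero (by simp [hb]) (mul_ne_zero (pow_ne_zero 2 he) (pow_ne_zero 2 hd)))]
  linear_combination (-8*ι^2*b^3*d^2*e^2) * h2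

lemma conj_Dfun (x : ℝ) : (starRingEnd ℂ) (Dfun β x) =
    -(2*Complex.I*β) / ((x:ℂ) - Complex.I*β)^2 := by
  unfold Dfun
  simp only [map_div₀, map_pow, map_add, map_mul, Complex.conj_ofReal, Complex.conj_I, map_ofNat]
  ring

lemma DconjD (x : ℝ) : Dfun β x * (starRingEnd ℂ) (Dfun β x) =
    (Complex.I / (2 * β)) * (((Mob β x)⁻¹ * (Mob β x)⁻¹ - 2 * (Mob β x)⁻¹ + 1) * Dfun β x) := by
  have hd := denom_ne_zero hβ x
  have he := numer_ne_zero hβ x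
  have hb : (β : ℂ) ≠ 0 := Complex.ofReal_ne_zero.mpr hβ.ne'
  rw [conj_Dfun hβ x]
  unfold Mob Dfun
  rw [inv_div]
  exact absDconjD _ _ _ _ hd he hb Complex.I_sq (by ring)

lemma pair_ptwise (j k : ℤ) (x : ℝ) :
    (Mob β x ^ j * Dfun β x) * (starRingEnd ℂ) (Mob β x ^ k * Dfun β x) =
    (Complex.I / (2 * β)) * (Mob β x ^ (j - k - 2) * Dfun β x)
      - (Complex.I / β) * (Mob β x ^ (j - k - 1) * Dfun β x)
      + (Complex.I / (2 * β)) * (Mob β x ^ (j - k) * Dfun β x) := by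
  have hM := mob_ne_zero hβ x
  have hb : (β : ℂ) ≠ 0 := Complex.ofReal_ne_zero.mpr hβ.ne'
  have e2 : Mob β x ^ (j - k - 2) = Mob β x ^ j * (Mob β x ^ k)⁻¹ * (Mob β x)⁻¹ * (Mob β x)⁻¹ := by
    rw [show j - k - 2 = j + -k + -1 + -1 by ring]
    simp [zpow_add₀ hM, zpow_neg, zpow_one]
  have e1 : Mob β x ^ (j - k - 1) = Mob β x ^ j * (Mob β x ^ k)⁻¹ * (Mob β x)⁻¹ := by
    rw [show j - k - 1 = j + -k + -1 by ring]
    simp [zpow_add₀ hM, zpow_neg, zpow_one]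
  have e0 : Mob β x ^ (j - k) = Mob β x ^ j * (Mob β x ^ k)⁻¹ := by
    rw [show j - k = j + -k by ring]
    simp [zpow_add₀ hM, zpow_neg]
  rw [e2, e1, e0, map_mul, map_zpow₀, conj_mob hβ]
  have := DconjD hβ x
  calc Mob β x ^ j * Dfun β x * (((Mob β x)⁻¹) ^ k * (starRingEnd ℂ) (Dfun β x))
      = (Mob β x ^ j * (Mob β x ^ k)⁻¹) * (Dfun β x * (starRingEnd ℂ) (Dfun β x)) := by
        rw [inv_zpow]; ring
    _ = (Mob β x ^ j * (Mob β x ^ k)⁻¹) *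
        ((Complex.I / (2 * β)) * (((Mob β x)⁻¹ * (Mob β x)⁻¹ - 2 * (Mob β x)⁻¹ + 1) * Dfun β x)) := by
        rw [this]
    _ = _ := by ring

lemma pair_integrable (j k : ℤ) :
    Integrable (fun x : ℝ => (Mob β x ^ j * Dfun β x) * (starRingEnd ℂ) (Mob β x ^ k * Dfun β x)) := by
  have : (fun x : ℝ => (Mob β x ^ j * Dfun β x) * (starRingEnd ℂ) (Mob β x ^ k * Dfun β x))
      = fun x => (Complex.I / (2 * β)) * (Mob β x ^ (j - k - 2) * Dfun β x)
        - (Complex.I / β) * (Mob β x ^ (j - k - 1) * Dfun β x)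
        + (Complex.I / (2 * β)) * (Mob β x ^ (j - k) * Dfun β x) := by
    funext x
    exact pair_ptwise hβ j k x
  rw [this]
  exact ((((integrable_zpow_mul_D hβ (j - k - 2)).const_mul _).sub
    ((integrable_zpow_mul_D hβ (j - k - 1)).const_mul _)).add
    ((integrable_zpow_mul_D hβ (j - k)).const_mul _))

lemma pair_integral (j k : ℤ) :
    ∫ x : ℝ, (Mob β x ^ j * Dfun β x) * (starRingEnd ℂ) (Mob β x ^ k * Dfun β x)
    = (Complex.I / (2 * β)) * Bint β (j - k - 2)
      - (Complex.I / β) * Bint β (j - k - 1)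
      + (Complex.I / (2 * β)) * Bint β (j - k) := by
  have hfun : (fun x : ℝ => (Mob β x ^ j * Dfun β x) * (starRingEnd ℂ) (Mob β x ^ k * Dfun β x))
      = fun x => (Complex.I / (2 * β)) * (Mob β x ^ (j - k - 2) * Dfun β x)
        - (Complex.I / β) * (Mob β x ^ (j - k - 1) * Dfun β x)
        + (Complex.I / (2 * β)) * (Mob β x ^ (j - k) * Dfun β x) := by
    funext x
    exact pair_ptwise hβ j k x
  rw [hfun]
  have hA : Integrable (fun x : ℝ => (Complex.I / (2 * (β:ℂ))) * (Mob β x ^ (j - k - 2) * Dfun β x)) :=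
    (integrable_zpow_mul_D hβ (j - k - 2)).const_mul _
  have hB : Integrable (fun x : ℝ => (Complex.I / (β:ℂ)) * (Mob β x ^ (j - k - 1) * Dfun β x)) :=
    (integrable_zpow_mul_D hβ (j - k - 1)).const_mul _
  have hC : Integrable (fun x : ℝ => (Complex.I / (2 * (β:ℂ))) * (Mob β x ^ (j - k) * Dfun β x)) :=
    (integrable_zpow_mul_D hβ (j - k)).const_mul _
  have hAB : Integrable (fun x : ℝ => (Complex.I / (2 * (β:ℂ))) * (Mob β x ^ (j - k - 2) * Dfun β x)
      - (Complex.I / (β:ℂ)) * (Mob β x ^ (j - k - 1) * Dfun β x)) := hA.sub hB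
  rw [MeasureTheory.integral_add hAB hC, MeasureTheory.integral_sub hA hB,
    MeasureTheory.integral_const_mul, MeasureTheory.integral_const_mul, MeasureTheory.integral_const_mul]
  rfl

lemma pair_zero {j k : ℤ} (h : j - k ≠ -1 ∧ j - k ≠ 0 ∧ j - k ≠ 1) :
    ∫ x : ℝ, (Mob β x ^ j * Dfun β x) * (starRingEnd ℂ) (Mob β x ^ k * Dfun β x) = 0 := by
  rw [pair_integral hβ j k, Bint_eq_zero hβ (by omega), Bint_eq_zero hβ (by omega),
    Bint_eq_zero hβ (by omega)]
  ring

lemma norm_Bint_le (m : ℤ) : ‖Bint β m‖ ≤ ‖Bint β (-1)‖ := by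
  by_cases h : m = -1
  · rw [h]
  · rw [Bint_eq_zero hβ h, norm_zero]
    exact norm_nonneg _

lemma pair_norm_le (j k : ℤ) :
    ‖∫ x : ℝ, (Mob β x ^ j * Dfun β x) * (starRingEnd ℂ) (Mob β x ^ k * Dfun β x)‖
    ≤ 2 * ‖Bint β (-1)‖ / β := by
  rw [pair_integral hβ j k]
  have hK := norm_nonneg (Bint β (-1))
  have h1 : ‖Complex.I / (2 * (β:ℂ))‖ = 1 / (2 * β) := by
    rw [norm_div, Complex.norm_I]
    congr 1
    rw [norm_mul]
    simp [Complex.norm_real, abs_of_pos hβ]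
  have h2 : ‖Complex.I / (β:ℂ)‖ = 1 / β := by
    rw [norm_div, Complex.norm_I]
    simp [Complex.norm_real, abs_of_pos hβ]
  calc ‖_‖ ≤ ‖(Complex.I / (2 * (β:ℂ))) * Bint β (j - k - 2)‖
        + ‖(Complex.I / (β:ℂ)) * Bint β (j - k - 1)‖
        + ‖(Complex.I / (2 * (β:ℂ))) * Bint β (j - k)‖ := by
          apply le_trans (norm_add_le _ _)
          gcongr
          apply norm_sub_le
    _ ≤ 1 / (2 * β) * ‖Bint β (-1)‖ + 1 / β * ‖Bint β (-1)‖ + 1 / (2 * β) * ‖Bint β (-1)‖ := by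
          rw [norm_mul, norm_mul, norm_mul, h1, h2]
          gcongr <;> exact norm_Bint_le hβ _
    _ = 2 * ‖Bint β (-1)‖ / β := by field_simp; ring

end P

namespace G
open RatH1 RatH1x B P

noncomputable def eps (j : ℤ) : ℂ := if 0 ≤ j then 1 else -1
noncomputable def ofs (j : ℤ) : ℤ := if 0 ≤ j then 0 else j

lemma norm_eps (j : ℤ) : ‖eps j‖ = 1 := by
  unfold eps
  split <;> simp

lemma sum_ite_int_le (m : ℕ) (w : ℤ) (K : ℝ) (hK : 0 ≤ K) :
    ∑ s ∈ Finset.range m, (if ((s:ℤ) = w) then K else 0) ≤ K := by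
  classical
  by_cases hw : ∃ s₀ ∈ Finset.range m, (s₀:ℤ) = w
  · obtain ⟨s₀, hs₀, rfl⟩ := hw
    have : ∀ s ∈ Finset.range m, (if ((s:ℤ) = (s₀:ℤ)) then K else 0)
        = if s = s₀ then K else 0 := by
      intro s _
      simp [Int.natCast_inj]
    rw [Finset.sum_congr rfl this, Finset.sum_ite_eq' (Finset.range m) s₀ (fun _ => K)]
    split <;> simp [hK]
  · push_neg at hw
    have : ∀ s ∈ Finset.range m, (if ((s:ℤ) = w) then K else 0) = 0 := by
      intro s hs
      simp [hw s hs]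
    rw [Finset.sum_congr rfl this]
    simpa using hK

variable {β : ℝ} (hβ : 0 < β)
include hβ

lemma conj_g (k : ℤ) (x : ℝ) :
    (starRingEnd ℂ) (Mob β x ^ k - 1) = Mob β x ^ (-k) - 1 := by
  rw [map_sub, map_one, map_zpow₀, conj_mob hβ, inv_zpow, ← zpow_neg]

lemma sq_sub (x : ℝ) : (Mob β x - 1) ^ 2 = 2 * Complex.I * β * Dfun β x := by
  have hd := denom_ne_zero hβ x
  unfold Mob Dfun
  field_simp
  ring

lemma gsum (j : ℤ) (x : ℝ) : Mob β x ^ j - 1 =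
    (Mob β x - 1) * (eps j * ∑ t ∈ Finset.range j.natAbs, Mob β x ^ (ofs j + t)) := by
  have hM := mob_ne_zero hβ x
  by_cases hj : 0 ≤ j
  · rw [eps, ofs, if_pos hj, if_pos hj, one_mul]
    have hn : j = (j.natAbs : ℤ) := (Int.natAbs_of_nonneg hj).symm
    rw [hn]
    have h1 : ∀ t : ℕ, Mob β x ^ ((0:ℤ) + t) = Mob β x ^ t := by
      intro t
      rw [zero_add, zpow_natCast]
    rw [Finset.sum_congr rfl (fun t _ => h1 t), zpow_natCast]
    rw [Int.natAbs_natCast, mul_comm, geom_sum_mul]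
  · rw [eps, ofs, if_neg hj, if_neg hj]
    have htele : (Mob β x - 1) * ∑ t ∈ Finset.range j.natAbs, Mob β x ^ (j + t)
        = 1 - Mob β x ^ j := by
      rw [Finset.mul_sum]
      have hterm : ∀ t ∈ Finset.range j.natAbs, (Mob β x - 1) * Mob β x ^ (j + t)
          = (fun t : ℕ => Mob β x ^ (j + t)) (t + 1) - (fun t : ℕ => Mob β x ^ (j + t)) t := by
        intro t _
        simp only []
        rw [sub_mul, one_mul]
        have hstep : Mob β x * Mob β x ^ (j + (t:ℤ)) = Mob β x ^ (1 + (j + (t:ℤ))) := by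
          rw [zpow_add₀ hM 1 (j + (t:ℤ)), zpow_one]
        rw [hstep]
        congr 1
        push_cast
        ring
      rw [Finset.sum_congr rfl hterm, Finset.sum_range_sub (fun t : ℕ => Mob β x ^ (j + t))]
      have h0 : j + (j.natAbs : ℤ) = 0 := by omega
      rw [h0]
      norm_num
    calc Mob β x ^ j - 1 = -(1 - Mob β x ^ j) := by ring
      _ = -((Mob β x - 1) * ∑ t ∈ Finset.range j.natAbs, Mob β x ^ (j + t)) := by rw [htele]
      _ = _ := by ring

lemma gg_expand (j l : ℤ) (x : ℝ) : (Mob β x ^ j - 1) * (Mob β x ^ l - 1) =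
    ∑ t ∈ Finset.range j.natAbs, ∑ s ∈ Finset.range l.natAbs,
      (eps j * eps l * (2 * Complex.I * β)) * (Mob β x ^ (ofs j + ofs l + t + s) * Dfun β x) := by
  have hM := mob_ne_zero hβ x
  rw [gsum hβ j x, gsum hβ l x]
  rw [show (Mob β x - 1) * (eps j * ∑ t ∈ Finset.range j.natAbs, Mob β x ^ (ofs j + t))
      * ((Mob β x - 1) * (eps l * ∑ s ∈ Finset.range l.natAbs, Mob β x ^ (ofs l + s)))
      = (eps j * eps l) * ((Mob β x - 1) ^ 2 *
        ((∑ t ∈ Finset.range j.natAbs, Mob β x ^ (ofs j + t))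
          * ∑ s ∈ Finset.range l.natAbs, Mob β x ^ (ofs l + s))) by ring]
  rw [sq_sub hβ x, Finset.sum_mul_sum]
  rw [Finset.mul_sum, Finset.mul_sum]
  apply Finset.sum_congr rfl
  intro t _
  rw [Finset.mul_sum, Finset.mul_sum]
  apply Finset.sum_congr rfl
  intro s _
  rw [← zpow_add₀ hM]
  rw [show ofs j + t + (ofs l + s) = ofs j + ofs l + t + s by ring]
  ring

lemma gg_integrable (j l : ℤ) :
    Integrable (fun x : ℝ => (Mob β x ^ j - 1) * (Mob β x ^ l - 1)) := by
  have : (fun x : ℝ => (Mob β x ^ j - 1) * (Mob β x ^ l - 1))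
      = fun x => ∑ t ∈ Finset.range j.natAbs, ∑ s ∈ Finset.range l.natAbs,
        (eps j * eps l * (2 * Complex.I * β)) * (Mob β x ^ (ofs j + ofs l + t + s) * Dfun β x) := by
    funext x
    exact gg_expand hβ j l x
  rw [this]
  apply integrable_finset_sum
  intro t _
  apply integrable_finset_sum
  intro s _
  exact (integrable_zpow_mul_D hβ _).const_mul _

lemma gg_integral_norm (j l : ℤ) :
    ‖∫ x : ℝ, (Mob β x ^ j - 1) * (Mob β x ^ l - 1)‖
      ≤ 2 * β * ‖Bint β (-1)‖ * j.natAbs := by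
  have hK : (0:ℝ) ≤ ‖Bint β (-1)‖ := norm_nonneg _
  have hfun : (fun x : ℝ => (Mob β x ^ j - 1) * (Mob β x ^ l - 1))
      = fun x => ∑ t ∈ Finset.range j.natAbs, ∑ s ∈ Finset.range l.natAbs,
        (eps j * eps l * (2 * Complex.I * β)) * (Mob β x ^ (ofs j + ofs l + t + s) * Dfun β x) := by
    funext x
    exact gg_expand hβ j l x
  rw [hfun]
  rw [integral_finset_sum _ (fun t _ => integrable_finset_sum _
    (fun s _ => (integrable_zpow_mul_D hβ _).const_mul _))]
  calc ‖∑ t ∈ Finset.range j.natAbs, ∫ x : ℝ, ∑ s ∈ Finset.range l.natAbs,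
        (eps j * eps l * (2 * Complex.I * β)) * (Mob β x ^ (ofs j + ofs l + t + s) * Dfun β x)‖
      ≤ ∑ t ∈ Finset.range j.natAbs, ‖∫ x : ℝ, ∑ s ∈ Finset.range l.natAbs,
        (eps j * eps l * (2 * Complex.I * β)) * (Mob β x ^ (ofs j + ofs l + t + s) * Dfun β x)‖ :=
        norm_sum_le _ _
    _ ≤ ∑ t ∈ Finset.range j.natAbs, (2 * β * ‖Bint β (-1)‖) := by
        apply Finset.sum_le_sum
        intro t _
        rw [integral_finset_sum _ (fun s _ => (integrable_zpow_mul_D hβ _).const_mul _)]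
        calc ‖∑ s ∈ Finset.range l.natAbs, ∫ x : ℝ,
              (eps j * eps l * (2 * Complex.I * β)) * (Mob β x ^ (ofs j + ofs l + t + s) * Dfun β x)‖
            ≤ ∑ s ∈ Finset.range l.natAbs, ‖∫ x : ℝ,
              (eps j * eps l * (2 * Complex.I * β)) * (Mob β x ^ (ofs j + ofs l + t + s) * Dfun β x)‖ :=
              norm_sum_le _ _
          _ ≤ ∑ s ∈ Finset.range l.natAbs,
              (if ((s:ℤ) = -1 - ofs j - ofs l - t) then 2 * β * ‖Bint β (-1)‖ else 0) := by
              apply Finset.sum_le_sum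
              intro s _
              rw [MeasureTheory.integral_const_mul]
              rw [norm_mul]
              have hnc : ‖eps j * eps l * (2 * Complex.I * (β:ℂ))‖ = 2 * β := by
                rw [norm_mul, norm_mul, norm_eps, norm_eps]
                simp [Complex.norm_I, Complex.norm_real, abs_of_pos hβ]
              rw [hnc]
              by_cases hcase : (s:ℤ) = -1 - ofs j - ofs l - t
              · rw [if_pos hcase]
                have : ofs j + ofs l + t + s = -1 := by omega
                rw [this]
                have := norm_Bint_le hβ (-1)
                unfold Bint at *
                nlinarith [norm_nonneg (∫ x : ℝ, Mob β x ^ (-1 : ℤ) * Dfun β x)]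
              · rw [if_neg hcase]
                have hne : ofs j + ofs l + t + s ≠ -1 := by omega
                have := Bint_eq_zero hβ hne
                unfold Bint at this
                rw [this, norm_zero, mul_zero]
          _ ≤ 2 * β * ‖Bint β (-1)‖ := by
              apply sum_ite_int_le
              positivity
    _ = 2 * β * ‖Bint β (-1)‖ * j.natAbs := by
        rw [Finset.sum_const, Finset.card_range, nsmul_eq_mul]
        ring

end G

namespace EST
open RatH1 RatH1x B P G

variable {β : ℝ} (hβ : 0 < β)
include hβ

lemma sq_norm_eq (z : ℂ) : ‖z‖ ^ 2 = (z * (starRingEnd ℂ) z).re := by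
  rw [Complex.mul_conj]
  rw [Complex.ofReal_re, Complex.normSq_eq_norm_sq]

omit hβ in
lemma RconjR_expand (S : Finset ℤ) (c : ℤ → ℂ) (g : ℤ → ℝ → ℂ) (x : ℝ) :
    (∑ k ∈ S, c k * g k x) * (starRingEnd ℂ) (∑ k ∈ S, c k * g k x)
    = ∑ j ∈ S, ∑ k ∈ S, (c j * (starRingEnd ℂ) (c k)) * (g j x * (starRingEnd ℂ) (g k x)) := by
  rw [map_sum, Finset.sum_mul_sum]
  apply Finset.sum_congr rfl
  intro j _
  apply Finset.sum_congr rfl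
  intro k _
  rw [map_mul]
  ring

lemma est_L2 (n : ℕ) (S : Finset ℤ) (hcard : S.card ≤ n) (habs : ∀ j ∈ S, j.natAbs ≤ n)
    (c : ℤ → ℂ) (s : ℝ) (hs : 0 ≤ s) (hc : ∀ k, ‖c k‖ ≤ s) :
    Integrable (fun x : ℝ => ‖∑ k ∈ S, c k * (Mob β x ^ k - 1)‖ ^ 2) ∧
    ∫ x : ℝ, ‖∑ k ∈ S, c k * (Mob β x ^ k - 1)‖ ^ 2
      ≤ 2 * β * ‖Bint β (-1)‖ * s ^ 2 * n ^ 3 := by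
  have hK : (0:ℝ) ≤ ‖Bint β (-1)‖ := norm_nonneg _
  set R : ℝ → ℂ := fun x => ∑ k ∈ S, c k * (Mob β x ^ k - 1) with hR
  have hexp : ∀ x : ℝ, R x * (starRingEnd ℂ) (R x)
      = ∑ j ∈ S, ∑ k ∈ S, (c j * (starRingEnd ℂ) (c k))
        * ((Mob β x ^ j - 1) * (Mob β x ^ (-k) - 1)) := by
    intro x
    rw [hR]
    rw [RconjR_expand S c (fun k x => Mob β x ^ k - 1) x]
    apply Finset.sum_congr rfl
    intro j _
    apply Finset.sum_congr rfl
    intro k _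
    rw [conj_g hβ k x]
  have hterm_int : ∀ j ∈ S, ∀ k ∈ S, Integrable (fun x : ℝ =>
      (c j * (starRingEnd ℂ) (c k)) * ((Mob β x ^ j - 1) * (Mob β x ^ (-k) - 1))) := by
    intro j _ k _
    exact (gg_integrable hβ j (-k)).const_mul _
  have hRR_int : Integrable (fun x : ℝ => R x * (starRingEnd ℂ) (R x)) := by
    have : (fun x : ℝ => R x * (starRingEnd ℂ) (R x)) = fun x =>
        ∑ j ∈ S, ∑ k ∈ S, (c j * (starRingEnd ℂ) (c k))
          * ((Mob β x ^ j - 1) * (Mob β x ^ (-k) - 1)) := funext hexp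
    rw [this]
    exact integrable_finset_sum _ (fun j hj => integrable_finset_sum _ (fun k hk =>
      hterm_int j hj k hk))
  have hsq_int : Integrable (fun x : ℝ => ‖R x‖ ^ 2) := by
    have : (fun x : ℝ => ‖R x‖ ^ 2) = fun x => (R x * (starRingEnd ℂ) (R x)).re := by
      funext x
      exact sq_norm_eq hβ (R x)
    rw [this]
    exact hRR_int.re
  refine ⟨hsq_int, ?_⟩
  have hval : ∫ x : ℝ, ‖R x‖ ^ 2 = (∫ x : ℝ, R x * (starRingEnd ℂ) (R x)).re := by
    have h := integral_re hRR_int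
    simp only [RCLike.re_eq_complex_re] at h
    rw [← h]
    apply MeasureTheory.integral_congr_ae
    filter_upwards with x
    exact sq_norm_eq hβ (R x)
  rw [hval]
  have hIexp : ∫ x : ℝ, R x * (starRingEnd ℂ) (R x)
      = ∑ j ∈ S, ∑ k ∈ S, (c j * (starRingEnd ℂ) (c k))
        * ∫ x : ℝ, (Mob β x ^ j - 1) * (Mob β x ^ (-k) - 1) := by
    rw [show (fun x : ℝ => R x * (starRingEnd ℂ) (R x)) = fun x =>
        ∑ j ∈ S, ∑ k ∈ S, (c j * (starRingEnd ℂ) (c k))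
          * ((Mob β x ^ j - 1) * (Mob β x ^ (-k) - 1)) from funext hexp]
    rw [integral_finset_sum _ (fun j hj => integrable_finset_sum _ (fun k hk =>
      hterm_int j hj k hk))]
    apply Finset.sum_congr rfl
    intro j hj
    rw [integral_finset_sum _ (fun k hk => hterm_int j hj k hk)]
    apply Finset.sum_congr rfl
    intro k hk
    exact MeasureTheory.integral_const_mul _ _
  calc (∫ x : ℝ, R x * (starRingEnd ℂ) (R x)).re
      ≤ ‖∫ x : ℝ, R x * (starRingEnd ℂ) (R x)‖ := Complex.re_le_norm _
    _ ≤ ∑ j ∈ S, ∑ k ∈ S, (s * s * (2 * β * ‖Bint β (-1)‖ * n)) := by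
        rw [hIexp]
        apply le_trans (norm_sum_le _ _)
        apply Finset.sum_le_sum
        intro j hj
        apply le_trans (norm_sum_le _ _)
        apply Finset.sum_le_sum
        intro k hk
        rw [norm_mul, norm_mul, RCLike.norm_conj]
        have h1 := gg_integral_norm hβ j (-k)
        have h2 : (j.natAbs : ℝ) ≤ n := by
          exact_mod_cast habs j hj
        calc ‖c j‖ * ‖c k‖ * ‖∫ x : ℝ, (Mob β x ^ j - 1) * (Mob β x ^ (-k) - 1)‖
            ≤ s * s * (2 * β * ‖Bint β (-1)‖ * j.natAbs) := by
              apply mul_le_mul (mul_le_mul (hc j) (hc k) (norm_nonneg _) hs) h1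
                (norm_nonneg _) (by positivity)
          _ ≤ s * s * (2 * β * ‖Bint β (-1)‖ * n) := by
              apply mul_le_mul_of_nonneg_left _ (by positivity)
              apply mul_le_mul_of_nonneg_left h2 (by positivity)
    _ = ((S.card : ℝ) * (S.card : ℝ)) * (s * s * (2 * β * ‖Bint β (-1)‖ * n)) := by
        rw [Finset.sum_const, Finset.sum_const, nsmul_eq_mul, nsmul_eq_mul]
        ring
    _ ≤ ((n : ℝ) * (n : ℝ)) * (s * s * (2 * β * ‖Bint β (-1)‖ * n)) := by
        apply mul_le_mul_of_nonneg_right _ (by positivity)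
        have hcardR : (S.card : ℝ) ≤ n := by exact_mod_cast hcard
        exact mul_le_mul hcardR hcardR (Nat.cast_nonneg _) (Nat.cast_nonneg _)
    _ = 2 * β * ‖Bint β (-1)‖ * s ^ 2 * n ^ 3 := by ring


lemma est_L2d (n : ℕ) (S : Finset ℤ) (hcard : S.card ≤ n)
    (d : ℤ → ℂ) (t : ℝ) (ht : 0 ≤ t) (hd : ∀ k ∈ S, ‖d k‖ ≤ t) :
    Integrable (fun x : ℝ => ‖∑ k ∈ S, d k * (Mob β x ^ (k - 1) * Dfun β x)‖ ^ 2) ∧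
    ∫ x : ℝ, ‖∑ k ∈ S, d k * (Mob β x ^ (k - 1) * Dfun β x)‖ ^ 2
      ≤ 6 * ‖Bint β (-1)‖ / β * t ^ 2 * n := by
  have hK : (0:ℝ) ≤ ‖Bint β (-1)‖ := norm_nonneg _
  set Q : ℝ → ℂ := fun x => ∑ k ∈ S, d k * (Mob β x ^ (k - 1) * Dfun β x) with hQ
  have hexp : ∀ x : ℝ, Q x * (starRingEnd ℂ) (Q x)
      = ∑ j ∈ S, ∑ k ∈ S, (d j * (starRingEnd ℂ) (d k))
        * ((Mob β x ^ (j - 1) * Dfun β x) * (starRingEnd ℂ) (Mob β x ^ (k - 1) * Dfun β x)) := by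
    intro x
    rw [hQ]
    exact RconjR_expand S d (fun k x => Mob β x ^ (k - 1) * Dfun β x) x
  have hterm_int : ∀ j ∈ S, ∀ k ∈ S, Integrable (fun x : ℝ =>
      (d j * (starRingEnd ℂ) (d k)) * ((Mob β x ^ (j - 1) * Dfun β x)
        * (starRingEnd ℂ) (Mob β x ^ (k - 1) * Dfun β x))) := by
    intro j _ k _
    exact (pair_integrable hβ (j - 1) (k - 1)).const_mul _
  have hQQ_int : Integrable (fun x : ℝ => Q x * (starRingEnd ℂ) (Q x)) := by
    rw [funext hexp]
    exact integrable_finset_sum _ (fun j hj => integrable_finset_sum _ (fun k hk =>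
      hterm_int j hj k hk))
  have hsq_int : Integrable (fun x : ℝ => ‖Q x‖ ^ 2) := by
    have : (fun x : ℝ => ‖Q x‖ ^ 2) = fun x => (Q x * (starRingEnd ℂ) (Q x)).re :=
      funext fun x => sq_norm_eq hβ (Q x)
    rw [this]
    exact hQQ_int.re
  refine ⟨hsq_int, ?_⟩
  have hval : ∫ x : ℝ, ‖Q x‖ ^ 2 = (∫ x : ℝ, Q x * (starRingEnd ℂ) (Q x)).re := by
    have h := integral_re hQQ_int
    simp only [RCLike.re_eq_complex_re] at h
    rw [← h]
    apply MeasureTheory.integral_congr_ae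
    filter_upwards with x
    exact sq_norm_eq hβ (Q x)
  rw [hval]
  have hIexp : ∫ x : ℝ, Q x * (starRingEnd ℂ) (Q x)
      = ∑ j ∈ S, ∑ k ∈ S, (d j * (starRingEnd ℂ) (d k))
        * ∫ x : ℝ, (Mob β x ^ (j - 1) * Dfun β x)
          * (starRingEnd ℂ) (Mob β x ^ (k - 1) * Dfun β x) := by
    rw [funext hexp]
    rw [integral_finset_sum _ (fun j hj => integrable_finset_sum _ (fun k hk =>
      hterm_int j hj k hk))]
    apply Finset.sum_congr rfl
    intro j hj
    rw [integral_finset_sum _ (fun k hk => hterm_int j hj k hk)]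
    apply Finset.sum_congr rfl
    intro k hk
    exact MeasureTheory.integral_const_mul _ _
  calc (∫ x : ℝ, Q x * (starRingEnd ℂ) (Q x)).re
      ≤ ‖∫ x : ℝ, Q x * (starRingEnd ℂ) (Q x)‖ := Complex.re_le_norm _
    _ ≤ ∑ j ∈ S, (3 * (t * t * (2 * ‖Bint β (-1)‖ / β))) := by
        rw [hIexp]
        apply le_trans (norm_sum_le _ _)
        apply Finset.sum_le_sum
        intro j hj
        apply le_trans (norm_sum_le _ _)
        calc ∑ k ∈ S, ‖(d j * (starRingEnd ℂ) (d k))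
              * ∫ x : ℝ, (Mob β x ^ (j - 1) * Dfun β x)
                * (starRingEnd ℂ) (Mob β x ^ (k - 1) * Dfun β x)‖
            ≤ ∑ k ∈ S, (if k ∈ ({j - 1, j, j + 1} : Finset ℤ)
                then t * t * (2 * ‖Bint β (-1)‖ / β) else 0) := by
              apply Finset.sum_le_sum
              intro k hk
              by_cases hk3 : k ∈ ({j - 1, j, j + 1} : Finset ℤ)
              · rw [if_pos hk3, norm_mul, norm_mul, RCLike.norm_conj]
                apply mul_le_mul (mul_le_mul (hd j hj) (hd k hk) (norm_nonneg _) ht)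
                  (pair_norm_le hβ (j - 1) (k - 1)) (norm_nonneg _) (by positivity)
              · rw [if_neg hk3]
                simp only [Finset.mem_insert, Finset.mem_singleton] at hk3
                push_neg at hk3
                rw [pair_zero hβ (by omega)]
                simp
            _ ≤ 3 * (t * t * (2 * ‖Bint β (-1)‖ / β)) := by
              rw [Finset.sum_ite_mem]
              rw [Finset.sum_const, nsmul_eq_mul]
              apply mul_le_mul_of_nonneg_right _ (by positivity)
              have h1 : (S ∩ {j - 1, j, j + 1}).card ≤ ({j - 1, j, j + 1} : Finset ℤ).card :=
                Finset.card_le_card (Finset.inter_subset_right)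
              have h2 : ({j - 1, j, j + 1} : Finset ℤ).card ≤ 3 := by
                apply le_trans (Finset.card_insert_le _ _)
                have := Finset.card_insert_le (j : ℤ) ({j + 1} : Finset ℤ)
                simp only [Finset.card_singleton] at this
                omega
              have : ((S ∩ {j - 1, j, j + 1}).card : ℝ) ≤ 3 := by
                exact_mod_cast le_trans h1 h2
              exact this
    _ = (S.card : ℝ) * (3 * (t * t * (2 * ‖Bint β (-1)‖ / β))) := by
        rw [Finset.sum_const, nsmul_eq_mul]
    _ ≤ (n : ℝ) * (3 * (t * t * (2 * ‖Bint β (-1)‖ / β))) := by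
        apply mul_le_mul_of_nonneg_right _ (by positivity)
        exact_mod_cast hcard
    _ = 6 * ‖Bint β (-1)‖ / β * t ^ 2 * n := by ring

end EST

namespace MAIN
open RatH1 RatH1x B P G EST

lemma bdd_of_tendsto {f : ℝ → ℂ} (hf : Continuous f)
    (htend : Filter.Tendsto f (Filter.cocompact ℝ) (nhds 0)) :
    BddAbove (Set.range fun x => ‖f x‖) := by
  have h1 : ∀ᶠ x in Filter.cocompact ℝ, ‖f x‖ < 1 := by
    have h2 : Filter.Tendsto (fun x => ‖f x‖) (Filter.cocompact ℝ) (nhds 0) := by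
      simpa using htend.norm
    exact h2.eventually_lt_const one_pos
  obtain ⟨K, hK, hKsub⟩ := Filter.mem_cocompact.mp h1
  obtain ⟨M, hM⟩ := hK.exists_bound_of_continuousOn hf.continuousOn
  refine ⟨max M 1, ?_⟩
  rintro y ⟨x, rfl⟩
  by_cases hx : x ∈ K
  · exact le_trans (hM x hx) (le_max_left _ _)
  · have h3 : x ∈ {x : ℝ | ‖f x‖ < 1} := hKsub hx
    exact le_trans h3.out.le (le_max_right _ _)

end MAIN

namespace MAIN2
open RatH1 RatH1x B P G EST MAIN

lemma dft_bound {β : ℝ} (n : ℕ) (hn : 0 < n) (f F : ℝ → ℂ)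
    (hbdd : BddAbove (Set.range fun x => ‖f x‖))
    (hF : ∀ θ ∈ Set.Ioo (0 : ℝ) (2 * Real.pi), F θ = f (Tmap β θ))
    (hF0 : F 0 = 0) (k : ℤ) :
    ‖dftCoeff n F k‖ ≤ ⨆ x : ℝ, ‖f x‖ := by
  set s := ⨆ x : ℝ, ‖f x‖ with hs
  have hle : ∀ x : ℝ, ‖f x‖ ≤ s := fun x => le_ciSup hbdd x
  have hs0 : 0 ≤ s := le_trans (norm_nonneg (f 0)) (hle 0)
  have hterm : ∀ ℓ ∈ Finset.range n,
      ‖Complex.exp (-Complex.I * (k : ℂ) * ((2 * Real.pi * ℓ / n : ℝ) : ℂ))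
        * F (2 * Real.pi * ℓ / n)‖ ≤ s := by
    intro ℓ hℓ
    rw [norm_mul]
    have hexp : ‖Complex.exp (-Complex.I * (k : ℂ) * ((2 * Real.pi * ℓ / n : ℝ) : ℂ))‖ = 1 := by
      rw [Complex.norm_exp]
      have : (-Complex.I * (k : ℂ) * ((2 * Real.pi * ℓ / n : ℝ) : ℂ)).re = 0 := by
        simp [Complex.mul_re, Complex.mul_im]
      rw [this, Real.exp_zero]
    rw [hexp, one_mul]
    rcases Nat.eq_zero_or_pos ℓ with h0 | hpos
    · subst h0
      have : (2 * Real.pi * (0:ℕ) / n : ℝ) = 0 := by simp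
      rw [this, hF0, norm_zero]
      exact hs0
    · have hmem : (2 * Real.pi * ℓ / n : ℝ) ∈ Set.Ioo (0 : ℝ) (2 * Real.pi) := by
        have hℓn : ℓ < n := Finset.mem_range.mp hℓ
        have hπ := Real.pi_pos
        constructor
        · apply div_pos
          · have : (0:ℝ) < (ℓ:ℝ) := by exact_mod_cast hpos
            positivity
          · exact_mod_cast hn
        · rw [div_lt_iff₀ (by exact_mod_cast hn)]
          have hℓR : (ℓ:ℝ) < n := by exact_mod_cast hℓn
          nlinarith
      rw [hF _ hmem]
      exact hle _
  calc ‖dftCoeff n F k‖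
      = ‖((n:ℕ) : ℂ)⁻¹‖ * ‖∑ ℓ ∈ Finset.range n,
          Complex.exp (-Complex.I * (k : ℂ) * ((2 * Real.pi * ℓ / n : ℝ) : ℂ))
            * F (2 * Real.pi * ℓ / n)‖ := by
        rw [dftCoeff, norm_mul]
    _ ≤ ((n:ℝ))⁻¹ * (n * s) := by
        apply mul_le_mul _ _ (norm_nonneg _) (by positivity)
        · rw [norm_inv]
          apply le_of_eq
          congr 1
          exact Complex.norm_natCast n
        · apply le_trans (norm_sum_le _ _)
          apply le_trans (Finset.sum_le_sum hterm)
          rw [Finset.sum_const, Finset.card_range, nsmul_eq_mul]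
    _ = s := by
        field_simp

lemma part1 (β : ℝ) (hβ : 0 < β) :
    ∃ C : ℝ, 0 < C ∧ ∀ n : ℕ, 1 < n → ∀ f F : ℝ → ℂ,
      Continuous f →
      Filter.Tendsto f (Filter.cocompact ℝ) (nhds 0) →
      (∀ θ ∈ Set.Ioo (0 : ℝ) (2 * Real.pi), F θ = f (Tmap β θ)) →
      F 0 = 0 →
      MemLp (fun x => ratInterp β n F x) 2 volume ∧
      MemLp (deriv (fun x => ratInterp β n F x)) 2 volume ∧
      H1norm (fun x => ratInterp β n F x)
        ≤ C * (n : ℝ) ^ ((3 : ℝ) / 2) * ⨆ x : ℝ, ‖f x‖ := by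
  set K := ‖B.Bint β (-1)‖ with hKdef
  have hK : 0 ≤ K := norm_nonneg _
  have hc2 : (0:ℝ) < 2 * β * K + 6 * K / β + 1 := by
    have h1 : 0 ≤ 2 * β * K := by positivity
    have h2 : 0 ≤ 6 * K / β := div_nonneg (by positivity) hβ.le
    linarith
  refine ⟨Real.sqrt (2 * β * K + 6 * K / β + 1), Real.sqrt_pos.mpr hc2, ?_⟩
  intro n hn f F hf htend hF hF0
  set s := ⨆ x : ℝ, ‖f x‖ with hs
  have hbdd := bdd_of_tendsto hf htend
  have hle : ∀ x : ℝ, ‖f x‖ ≤ s := fun x => le_ciSup hbdd x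
  have hs0 : 0 ≤ s := le_trans (norm_nonneg (f 0)) (hle 0)
  have hc : ∀ k : ℤ, ‖dftCoeff n F k‖ ≤ s :=
    dft_bound n (by omega) f F hbdd hF hF0
  set S := Finset.Icc (-(((n - 1) / 2 : ℕ) : ℤ)) ((n / 2 : ℕ) : ℤ) with hSdef
  have hcard : S.card ≤ n := by
    rw [hSdef, Int.card_Icc]
    omega
  have habs : ∀ j ∈ S, j.natAbs ≤ n := by
    intro j hj
    rw [hSdef, Finset.mem_Icc] at hj
    omega
  set c : ℤ → ℂ := dftCoeff n F with hcdef
  have hRdef : (fun x => ratInterp β n F x)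
      = fun x => ∑ k ∈ S, c k * (Mob β x ^ k - 1) := by
    funext x
    rw [ratInterp]
  have hcontR : Continuous (fun x => ∑ k ∈ S, c k * (Mob β x ^ k - 1)) := by
    apply continuous_finset_sum
    intro k _
    exact continuous_const.mul ((continuous_mob_zpow hβ k).sub continuous_const)
  have hcontRd : Continuous (fun x => ∑ k ∈ S, (c k * (k:ℂ)) * (Mob β x ^ (k - 1) * Dfun β x)) := by
    apply continuous_finset_sum
    intro k _
    exact continuous_const.mul (((continuous_mob_zpow hβ (k-1))).mul (continuous_Dfun hβ))
  have hder : ∀ x : ℝ, HasDerivAt (fun x => ∑ k ∈ S, c k * (Mob β x ^ k - 1))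
      (∑ k ∈ S, (c k * (k:ℂ)) * (Mob β x ^ (k - 1) * Dfun β x)) x := by
    intro x
    have h := HasDerivAt.fun_sum (fun k (_ : k ∈ S) =>
      (((hasDerivAt_mob_zpow hβ k x).sub_const 1).const_mul (c k)))
    refine h.congr_deriv ?_
    apply Finset.sum_congr rfl
    intro k _
    ring
  have hderiv_eq : deriv (fun x => ratInterp β n F x)
      = fun x => ∑ k ∈ S, (c k * (k:ℂ)) * (Mob β x ^ (k - 1) * Dfun β x) := by
    funext x
    apply HasDerivAt.deriv
    rw [hRdef]
    exact hder x
  have hdbound : ∀ k ∈ S, ‖c k * (k:ℂ)‖ ≤ s * n := by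
    intro k hk
    rw [norm_mul]
    have h1 : ‖((k:ℤ) : ℂ)‖ ≤ (n:ℝ) := by
      have hcast : ((k:ℤ) : ℂ) = (((k:ℤ) : ℝ) : ℂ) := by push_cast; ring
      rw [hcast, Complex.norm_real, Real.norm_eq_abs]
      rw [hSdef, Finset.mem_Icc] at hk
      rw [← Int.cast_abs]
      have : |k| ≤ (n:ℤ) := abs_le.mpr (by constructor <;> omega)
      exact_mod_cast this
    exact mul_le_mul (hc k) h1 (norm_nonneg _) hs0
  obtain ⟨hint1, hbound1⟩ := est_L2 hβ n S hcard habs c s hs0 hc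
  obtain ⟨hint2, hbound2⟩ := est_L2d hβ n S hcard (fun k => c k * (k:ℂ)) (s * n)
    (by positivity) hdbound
  have hmem1 : MemLp (fun x => ratInterp β n F x) 2 volume := by
    rw [hRdef]
    exact (memLp_two_iff_integrable_sq_norm hcontR.aestronglyMeasurable).mpr hint1
  have hmem2 : MemLp (deriv (fun x => ratInterp β n F x)) 2 volume := by
    rw [hderiv_eq]
    exact (memLp_two_iff_integrable_sq_norm hcontRd.aestronglyMeasurable).mpr hint2
  refine ⟨hmem1, hmem2, ?_⟩
  have hRx : ∀ x : ℝ, ratInterp β n F x = ∑ k ∈ S, c k * (Mob β x ^ k - 1) :=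
    fun x => congrFun hRdef x
  rw [H1norm, hderiv_eq]
  simp only [hRx]
  have hA : (0:ℝ) ≤ ∫ x : ℝ, ‖∑ k ∈ S, c k * (Mob β x ^ k - 1)‖ ^ 2 :=
    integral_nonneg (fun x => by positivity)
  have hB : (0:ℝ) ≤ ∫ x : ℝ, ‖∑ k ∈ S, (c k * (k:ℂ)) * (Mob β x ^ (k - 1) * Dfun β x)‖ ^ 2 :=
    integral_nonneg (fun x => by positivity)
  have hsum : (∫ x : ℝ, ‖∑ k ∈ S, c k * (Mob β x ^ k - 1)‖ ^ 2)
      + (∫ x : ℝ, ‖∑ k ∈ S, (c k * (k:ℂ)) * (Mob β x ^ (k - 1) * Dfun β x)‖ ^ 2)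
      ≤ (2 * β * K + 6 * K / β + 1) * (s ^ 2 * (n:ℝ) ^ (3:ℕ)) := by
    have h2 : 6 * K / β * (s * n) ^ 2 * n = (6 * K / β) * (s ^ 2 * (n:ℝ) ^ (3:ℕ)) := by ring
    have h3 : 2 * β * K * s ^ 2 * (n:ℝ) ^ (3:ℕ) = (2 * β * K) * (s ^ 2 * (n:ℝ) ^ (3:ℕ)) := by ring
    have h4 : (0:ℝ) ≤ s ^ 2 * (n:ℝ) ^ (3:ℕ) := by positivity
    nlinarith [hbound1, hbound2]
  calc ((∫ x : ℝ, ‖∑ k ∈ S, c k * (Mob β x ^ k - 1)‖ ^ 2)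
      + ∫ x : ℝ, ‖∑ k ∈ S, (c k * (k:ℂ)) * (Mob β x ^ (k - 1) * Dfun β x)‖ ^ 2) ^ ((1:ℝ)/2)
      = Real.sqrt ((∫ x : ℝ, ‖∑ k ∈ S, c k * (Mob β x ^ k - 1)‖ ^ 2)
        + ∫ x : ℝ, ‖∑ k ∈ S, (c k * (k:ℂ)) * (Mob β x ^ (k - 1) * Dfun β x)‖ ^ 2) := by
        rw [Real.sqrt_eq_rpow]
    _ ≤ Real.sqrt ((2 * β * K + 6 * K / β + 1) * (s ^ 2 * (n:ℝ) ^ (3:ℕ))) :=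
        Real.sqrt_le_sqrt hsum
    _ = Real.sqrt (2 * β * K + 6 * K / β + 1) * (s * Real.sqrt ((n:ℝ) ^ (3:ℕ))) := by
        rw [Real.sqrt_mul hc2.le, Real.sqrt_mul (by positivity), Real.sqrt_sq hs0]
    _ = Real.sqrt (2 * β * K + 6 * K / β + 1) * (n:ℝ) ^ ((3:ℝ)/2) * s := by
        have : Real.sqrt ((n:ℝ) ^ (3:ℕ)) = (n:ℝ) ^ ((3:ℝ)/2) := by
          rw [Real.sqrt_eq_rpow, ← Real.rpow_natCast (n:ℝ) 3, ← Real.rpow_mul (Nat.cast_nonneg n)]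
          norm_num
        rw [this]
        ring

end MAIN2

namespace MAIN3
open RatH1 RatH1x B P G EST MAIN MAIN2

lemma sup_le_H1 (f : ℝ → ℂ) (hf : Continuous f) (hdiff : Differentiable ℝ f)
    (htend : Filter.Tendsto f (Filter.cocompact ℝ) (nhds 0))
    (hf2 : MemLp f 2 volume) (hf'2 : MemLp (deriv f) 2 volume) (x₀ : ℝ) :
    ‖f x₀‖ ≤ H1norm f := by
  have hint1 : Integrable (fun x : ℝ => ‖f x‖ ^ 2) :=
    (memLp_two_iff_integrable_sq_norm hf2.aestronglyMeasurable).mp hf2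
  have hint2 : Integrable (fun x : ℝ => ‖deriv f x‖ ^ 2) :=
    (memLp_two_iff_integrable_sq_norm hf'2.aestronglyMeasurable).mp hf'2
  set G : ℝ → ℝ := fun x => (deriv f x * (starRingEnd ℂ) (f x)
    + f x * (starRingEnd ℂ) (deriv f x)).re with hGdef
  have hgderiv : ∀ x : ℝ, HasDerivAt (fun x => (f x * (starRingEnd ℂ) (f x)).re) (G x) x := by
    intro x
    have hfd : HasDerivAt f (deriv f x) x := (hdiff x).hasDerivAt
    have hconj : HasDerivAt (fun x => (starRingEnd ℂ) (f x)) ((starRingEnd ℂ) (deriv f x)) x := by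
      have h := (Complex.conjCLE.toContinuousLinearMap.hasFDerivAt (x := f x)).comp_hasDerivAt x hfd
      exact h
    have hmul := hfd.mul hconj
    have hre := (Complex.reCLM.hasFDerivAt
      (x := f x * (starRingEnd ℂ) (f x))).comp_hasDerivAt x hmul
    exact hre
  have hGbound : ∀ x : ℝ, |G x| ≤ ‖f x‖ ^ 2 + ‖deriv f x‖ ^ 2 := by
    intro x
    have h1 : |G x| ≤ ‖deriv f x * (starRingEnd ℂ) (f x) + f x * (starRingEnd ℂ) (deriv f x)‖ :=
      Complex.abs_re_le_norm _
    apply le_trans h1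
    apply le_trans (norm_add_le _ _)
    rw [norm_mul, norm_mul, RCLike.norm_conj, RCLike.norm_conj]
    nlinarith [norm_nonneg (f x), norm_nonneg (deriv f x), sq_nonneg (‖f x‖ - ‖deriv f x‖)]
  have hGmeas : AEStronglyMeasurable G volume := by
    apply Continuous.comp_aestronglyMeasurable Complex.continuous_re
    apply AEStronglyMeasurable.add
    · exact hf'2.aestronglyMeasurable.mul
        (Complex.continuous_conj.comp_aestronglyMeasurable hf.aestronglyMeasurable)
    · exact hf.aestronglyMeasurable.mul
        (Complex.continuous_conj.comp_aestronglyMeasurable hf'2.aestronglyMeasurable)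
  have hGint : Integrable G := by
    apply Integrable.mono' (hint1.add hint2) hGmeas
    filter_upwards with x
    rw [Real.norm_eq_abs]
    exact hGbound x
  have htop : Filter.Tendsto (fun x => (f x * (starRingEnd ℂ) (f x)).re) Filter.atTop (nhds 0) := by
    have hTop : Filter.Tendsto f Filter.atTop (nhds 0) := by
      apply htend.mono_left
      rw [cocompact_eq_atBot_atTop]
      exact le_sup_right
    have h2 : Filter.Tendsto (fun x => ‖f x‖ ^ 2) Filter.atTop (nhds 0) := by
      have := (hTop.norm).pow 2
      simpa using this
    apply h2.congr
    intro x
    exact sq_norm_eq one_pos (f x)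
  have hftc := MeasureTheory.integral_Ioi_of_hasDerivAt_of_tendsto' (a := x₀)
    (f' := G) (fun x _ => hgderiv x) hGint.integrableOn htop
  have hkey : ‖f x₀‖ ^ 2 ≤ (∫ x : ℝ, ‖f x‖ ^ 2) + ∫ x : ℝ, ‖deriv f x‖ ^ 2 := by
    have h0 : ‖f x₀‖ ^ 2 = -(∫ x in Set.Ioi x₀, G x) := by
      rw [hftc, sq_norm_eq one_pos (f x₀)]
      ring
    rw [h0]
    calc -(∫ x in Set.Ioi x₀, G x) ≤ |∫ x in Set.Ioi x₀, G x| := neg_le_abs _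
      _ ≤ ∫ x in Set.Ioi x₀, |G x| := by
          have := norm_integral_le_integral_norm (μ := volume.restrict (Set.Ioi x₀)) G
          simpa [Real.norm_eq_abs] using this
      _ ≤ ∫ x : ℝ, |G x| := by
          apply setIntegral_le_integral hGint.abs
          filter_upwards with x
          exact abs_nonneg _
      _ ≤ ∫ x : ℝ, (‖f x‖ ^ 2 + ‖deriv f x‖ ^ 2) := by
          apply integral_mono hGint.abs (hint1.add hint2)
          intro x
          exact hGbound x
      _ = (∫ x : ℝ, ‖f x‖ ^ 2) + ∫ x : ℝ, ‖deriv f x‖ ^ 2 :=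
          integral_add hint1 hint2
  have hnn : (0:ℝ) ≤ (∫ x : ℝ, ‖f x‖ ^ 2) + ∫ x : ℝ, ‖deriv f x‖ ^ 2 := by
    have := sq_nonneg ‖f x₀‖
    linarith
  rw [H1norm, ← Real.sqrt_eq_rpow]
  calc ‖f x₀‖ = Real.sqrt (‖f x₀‖ ^ 2) := (Real.sqrt_sq (norm_nonneg _)).symm
    _ ≤ Real.sqrt ((∫ x : ℝ, ‖f x‖ ^ 2) + ∫ x : ℝ, ‖deriv f x‖ ^ 2) := Real.sqrt_le_sqrt hkey

end MAIN3


/-- **`C⁰₀(ℝ) → H¹(ℝ)` and `H¹(ℝ) → H¹(ℝ)` bounds for the rational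
interpolation operator.** Fix `β > 0`. There is a constant `C` such that for
every `n > 1` and every continuous `f : ℝ → ℂ` vanishing at infinity (with
associated periodic function `F`), `R_n f` and `(R_n f)′` are in `L²(ℝ)` and
`(∫ |R_n f|² + ∫ |(R_n f)′|²)^{1/2} ≤ C n^{3/2} sup_x |f(x)|`. Consequently
there is `C₁` with `‖R_n f‖_{H¹(ℝ)} ≤ C₁ n^{3/2} ‖f‖_{H¹(ℝ)}` for every
`f ∈ H¹(ℝ)`. -/
theorem ratInterp_H1_norm (β : ℝ) (hβ : 0 < β) :
    (∃ C : ℝ, 0 < C ∧ ∀ n : ℕ, 1 < n → ∀ f F : ℝ → ℂ,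
      Continuous f →
      Filter.Tendsto f (Filter.cocompact ℝ) (nhds 0) →
      Function.Periodic F (2 * Real.pi) →
      (∀ θ ∈ Set.Ioo (0 : ℝ) (2 * Real.pi), F θ = f (Tmap β θ)) →
      F 0 = 0 →
      MemLp (fun x => ratInterp β n F x) 2 volume ∧
      MemLp (deriv (fun x => ratInterp β n F x)) 2 volume ∧
      H1norm (fun x => ratInterp β n F x)
        ≤ C * (n : ℝ) ^ ((3 : ℝ) / 2) * ⨆ x : ℝ, ‖f x‖) ∧
    (∃ C₁ : ℝ, 0 < C₁ ∧ ∀ n : ℕ, 1 < n → ∀ f F : ℝ → ℂ,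
      Continuous f →
      Differentiable ℝ f →
      Filter.Tendsto f (Filter.cocompact ℝ) (nhds 0) →
      MemLp f 2 volume →
      MemLp (deriv f) 2 volume →
      Function.Periodic F (2 * Real.pi) →
      (∀ θ ∈ Set.Ioo (0 : ℝ) (2 * Real.pi), F θ = f (Tmap β θ)) →
      F 0 = 0 →
      H1norm (fun x => ratInterp β n F x)
        ≤ C₁ * (n : ℝ) ^ ((3 : ℝ) / 2) * H1norm f) := by
  
  obtain ⟨C, hC, hP⟩ := MAIN2.part1 β hβ
  constructor
  · exact ⟨C, hC, fun n hn f F hf htend _ hF hF0 => hP n hn f F hf htend hF hF0⟩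
  · refine ⟨C, hC, ?_⟩
    intro n hn f F hf hdiff htend hf2 hf'2 _ hF hF0
    obtain ⟨_, _, hb⟩ := hP n hn f F hf htend hF hF0
    apply le_trans hb
    have hsle : (⨆ x : ℝ, ‖f x‖) ≤ H1norm f :=
      ciSup_le (fun x => MAIN3.sup_le_H1 f hf hdiff htend hf2 hf'2 x)
    apply mul_le_mul_of_nonneg_left hsle
    positivity
end

section
/- Let 1 < p < ∞. There is a constant C_p such that for every odd integer n > 1 and every real ε with 0 ≤ ε ≤ π n₋, the derivative of the Dirichlet kernel satisfies ( ∫_{ε/n₋}^{2π − ε/n₋} | D_n′(θ) |^p dθ )^{1/p} ≤ C_p (1+ε) ( n₋ / (1+ε) )^{2 − 1/p}. -/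
set_option maxHeartbeats 1000000

open Complex Finset Real

/-- The Dirichlet kernel `D_n(θ) = ∑_{k=-n₋}^{n₊} e^{ikθ}`,
with `n₊ = ⌊n/2⌋`, `n₋ = ⌊(n-1)/2⌋`. -/
noncomputable def DirK (n : ℕ) (θ : ℝ) : ℂ :=
  ∑ k ∈ Finset.Icc (-(((n - 1) / 2 : ℕ) : ℤ)) ((n / 2 : ℕ) : ℤ),
    Complex.exp (Complex.I * (k : ℂ) * (θ : ℂ))


lemma Icc_insert_top (a b : ℤ) (h : a ≤ b + 1) :
    Finset.Icc a (b+1) = insert (b+1) (Finset.Icc a b) := by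
  ext x; simp only [Finset.mem_Icc, Finset.mem_insert]; omega

lemma sum_Icc_top (a b : ℤ) (h : a ≤ b + 1) (f : ℤ → ℂ) :
    ∑ k ∈ Finset.Icc a (b+1), f k = (∑ k ∈ Finset.Icc a b, f k) + f (b+1) := by
  rw [Icc_insert_top a b h, Finset.sum_insert (by simp only [Finset.mem_insert, Finset.mem_Icc]; omega)]
  ring

lemma abel_identity (w : ℂ) (m : ℕ) :
    (w - 1)^2 * ∑ k ∈ Finset.Icc (1:ℤ) (m:ℤ), (k:ℂ) * w ^ k
      = m * w^(m+2) - (m+1) * w^(m+1) + w := by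
  induction m with
  | zero => simp
  | succ m ih =>
    have h : ((m+1 : ℕ) : ℤ) = (m:ℤ) + 1 := by push_cast; ring
    rw [h, sum_Icc_top 1 (m:ℤ) (by omega), mul_add, ih]
    have h2 : w ^ ((m:ℤ)+1) = w ^ (m+1 : ℕ) := by
      rw [show ((m:ℤ)+1) = ((m+1 : ℕ) : ℤ) by push_cast; ring, zpow_natCast]
    rw [h2]
    push_cast
    ring

lemma abel_norm (w : ℂ) (hw : ‖w‖ = 1) (m : ℕ) :
    ‖∑ k ∈ Finset.Icc (1:ℤ) (m:ℤ), (k:ℂ) * w ^ k‖ * ‖w - 1‖^2 ≤ m * ‖w - 1‖ + 2 := by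
  have h := abel_identity w m
  have h1 : ‖∑ k ∈ Finset.Icc (1:ℤ) (m:ℤ), (k:ℂ) * w ^ k‖ * ‖w - 1‖^2
      = ‖(m:ℂ) * w^(m+1) * (w - 1) - w * (w^m - 1)‖ := by
    rw [← norm_pow, ← norm_mul, mul_comm]
    congr 1
    rw [h]; ring
  rw [h1]
  calc ‖(m:ℂ) * w^(m+1) * (w - 1) - w * (w^m - 1)‖
      ≤ ‖(m:ℂ) * w^(m+1) * (w - 1)‖ + ‖w * (w^m - 1)‖ := norm_sub_le _ _
    _ ≤ m * ‖w - 1‖ + 2 := by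
        rw [norm_mul, norm_mul, norm_mul, norm_pow, hw]
        have h2 : ‖w^m - 1‖ ≤ 2 := by
          calc ‖w^m - 1‖ ≤ ‖w^m‖ + ‖(1:ℂ)‖ := norm_sub_le _ _
            _ = 2 := by rw [norm_pow, hw]; norm_num
        simp only [Complex.norm_natCast, one_pow, mul_one, one_mul]
        nlinarith [norm_nonneg (w - 1), Nat.cast_nonneg (α := ℝ) m]

lemma sum_Icc_neg (m : ℕ) (f : ℤ → ℂ) :
    ∑ k ∈ Finset.Icc (-(m:ℤ)) (m:ℤ), f k
      = f 0 + ∑ k ∈ Finset.Icc (1:ℤ) (m:ℤ), (f k + f (-k)) := by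
  induction m with
  | zero => simp
  | succ m ih =>
    have h : ((m+1 : ℕ) : ℤ) = (m:ℤ) + 1 := by push_cast; ring
    rw [h]
    have h1 : Finset.Icc (-((m:ℤ)+1)) ((m:ℤ)+1)
        = insert (-((m:ℤ)+1)) (insert ((m:ℤ)+1) (Finset.Icc (-(m:ℤ)) (m:ℤ))) := by
      ext x; simp only [Finset.mem_Icc, Finset.mem_insert]; omega
    rw [h1, Finset.sum_insert (by simp only [Finset.mem_insert, Finset.mem_Icc]; omega),
      Finset.sum_insert (by simp only [Finset.mem_insert, Finset.mem_Icc]; omega), ih,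
      sum_Icc_top 1 (m:ℤ) (by omega)]
    ring

lemma dirK_hasDerivAt (n : ℕ) (θ : ℝ) :
    HasDerivAt (DirK n)
      (∑ k ∈ Finset.Icc (-(((n - 1) / 2 : ℕ) : ℤ)) ((n / 2 : ℕ) : ℤ),
        (Complex.I * (k:ℂ)) * Complex.exp (Complex.I * (k:ℂ) * (θ:ℂ))) θ := by
  have : HasDerivAt (fun t : ℝ => ∑ k ∈ Finset.Icc (-(((n - 1) / 2 : ℕ) : ℤ)) ((n / 2 : ℕ) : ℤ),
      Complex.exp (Complex.I * (k:ℂ) * (t:ℂ)))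
      (∑ k ∈ Finset.Icc (-(((n - 1) / 2 : ℕ) : ℤ)) ((n / 2 : ℕ) : ℤ),
        (Complex.I * (k:ℂ)) * Complex.exp (Complex.I * (k:ℂ) * (θ:ℂ))) θ := by
    apply HasDerivAt.fun_sum
    intro k _
    have h1 : HasDerivAt (fun z : ℂ => Complex.exp (Complex.I * (k:ℂ) * z))
        (Complex.I * (k:ℂ) * Complex.exp (Complex.I * (k:ℂ) * (θ:ℂ))) (θ:ℂ) := by
      have := (((hasDerivAt_id (θ:ℂ)).const_mul (Complex.I * (k:ℂ)))).cexp
      simpa [mul_comm] using this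
    exact h1.comp_ofReal
  exact this

lemma dirK_deriv (n : ℕ) (θ : ℝ) :
    deriv (DirK n) θ
      = ∑ k ∈ Finset.Icc (-(((n - 1) / 2 : ℕ) : ℤ)) ((n / 2 : ℕ) : ℤ),
        (Complex.I * (k:ℂ)) * Complex.exp (Complex.I * (k:ℂ) * (θ:ℂ)) :=
  (dirK_hasDerivAt n θ).deriv

lemma norm_exp_I_int (k : ℤ) (θ : ℝ) : ‖Complex.exp (Complex.I * (k:ℂ) * (θ:ℂ))‖ = 1 := by
  rw [Complex.norm_exp]
  simp

lemma dirK_deriv_crude (n m : ℕ) (h1 : (n-1)/2 = m) (h2 : n/2 = m) (θ : ℝ) :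
    ‖deriv (DirK n) θ‖ ≤ 3 * (m:ℝ)^2 := by
  rw [dirK_deriv, h1, h2]
  calc ‖∑ k ∈ Finset.Icc (-(m:ℤ)) (m:ℤ), (Complex.I * (k:ℂ)) * Complex.exp (Complex.I * (k:ℂ) * (θ:ℂ))‖
      ≤ ∑ k ∈ Finset.Icc (-(m:ℤ)) (m:ℤ), ‖(Complex.I * (k:ℂ)) * Complex.exp (Complex.I * (k:ℂ) * (θ:ℂ))‖ :=
        norm_sum_le _ _
    _ ≤ ∑ k ∈ Finset.Icc (-(m:ℤ)) (m:ℤ), (m:ℝ) := by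
        apply Finset.sum_le_sum
        intro k hk
        rw [norm_mul, norm_exp_I_int, mul_one, norm_mul, Complex.norm_I, one_mul]
        simp only [Finset.mem_Icc] at hk
        rw [Complex.norm_intCast]
        have : |k| ≤ (m:ℤ) := abs_le.mpr ⟨hk.1, hk.2⟩
        calc (|(k:ℝ)| : ℝ) = ((|k| : ℤ) : ℝ) := by push_cast; simp
          _ ≤ (m:ℝ) := by exact_mod_cast this
    _ ≤ 3 * (m:ℝ)^2 := by
        rw [Finset.sum_const, Int.card_Icc]
        have hcard : ((m:ℤ) + 1 - -(m:ℤ)).toNat = 2*m+1 := by omega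
        rw [hcard, nsmul_eq_mul]
        have : (0:ℝ) ≤ m := Nat.cast_nonneg m
        have hm2 : (m:ℝ) ≤ (m:ℝ)^2 := by
          have : m ≤ m^2 := Nat.le_self_pow two_ne_zero m
          exact_mod_cast this
        push_cast
        nlinarith

lemma dirK_deriv_refined (n m : ℕ) (h1 : (n-1)/2 = m) (h2 : n/2 = m) (θ : ℝ)
    (hd : 0 < ‖Complex.exp (Complex.I * (θ:ℂ)) - 1‖) :
    ‖deriv (DirK n) θ‖
      ≤ 2 * ((m:ℝ) * ‖Complex.exp (Complex.I * (θ:ℂ)) - 1‖ + 2)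
          / ‖Complex.exp (Complex.I * (θ:ℂ)) - 1‖^2 := by
  set z : ℂ := Complex.exp (Complex.I * (θ:ℂ)) with hz
  set w : ℂ := Complex.exp (-(Complex.I * (θ:ℂ))) with hwdef
  set d : ℝ := ‖z - 1‖ with hdd
  have hznorm : ‖z‖ = 1 := by
    rw [hz, Complex.norm_exp]
    simp
  have hwz : w = (starRingEnd ℂ) z := by
    rw [hz, hwdef, ← Complex.exp_conj]
    congr 1
    simp [Complex.conj_ofReal]
  have hwnorm : ‖w‖ = 1 := by rw [hwz, RCLike.norm_conj]; exact hznorm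
  have hwd : ‖w - 1‖ = d := by
    rw [hwz, hdd, ← RCLike.norm_conj (z - 1)]
    congr 1
    simp [map_sub]
  -- express exp (I k θ) as powers
  have hzk : ∀ k : ℤ, Complex.exp (Complex.I * (k:ℂ) * (θ:ℂ)) = z ^ k := by
    intro k
    rw [hz, ← Complex.exp_int_mul]
    congr 1; ring
  have hwk : ∀ k : ℤ, Complex.exp (Complex.I * (-k:ℂ) * (θ:ℂ)) = w ^ k := by
    intro k
    rw [hwdef, ← Complex.exp_int_mul]
    congr 1; push_cast; ring
  rw [dirK_deriv, h1, h2]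
  rw [sum_Icc_neg m (fun k => (Complex.I * (k:ℂ)) * Complex.exp (Complex.I * (k:ℂ) * (θ:ℂ)))]
  have hsum : ∑ k ∈ Finset.Icc (1:ℤ) (m:ℤ),
      ((Complex.I * (k:ℂ)) * Complex.exp (Complex.I * (k:ℂ) * (θ:ℂ))
        + (Complex.I * ((-k:ℤ):ℂ)) * Complex.exp (Complex.I * ((-k:ℤ):ℂ) * (θ:ℂ)))
      = Complex.I * ((∑ k ∈ Finset.Icc (1:ℤ) (m:ℤ), (k:ℂ) * z ^ k)
          - ∑ k ∈ Finset.Icc (1:ℤ) (m:ℤ), (k:ℂ) * w ^ k) := by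
    have step : ∀ k ∈ Finset.Icc (1:ℤ) (m:ℤ),
        (Complex.I * (k:ℂ)) * Complex.exp (Complex.I * (k:ℂ) * (θ:ℂ))
          + (Complex.I * ((-k:ℤ):ℂ)) * Complex.exp (Complex.I * ((-k:ℤ):ℂ) * (θ:ℂ))
        = Complex.I * ((k:ℂ) * z ^ k) - Complex.I * ((k:ℂ) * w ^ k) := by
      intro k _
      rw [hzk k]
      have hw2 : Complex.exp (Complex.I * ((-k:ℤ):ℂ) * (θ:ℂ)) = w ^ k := by
        rw [← hwk k]; push_cast; ring_nf
      rw [hw2]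
      push_cast
      ring
    rw [Finset.sum_congr rfl step, Finset.sum_sub_distrib, ← Finset.mul_sum,
      ← Finset.mul_sum, ← mul_sub]
  simp only [Int.cast_zero, mul_zero, zero_mul, zero_add]
  rw [hsum]
  have hd2 : (0:ℝ) < d^2 := by positivity
  have bz := abel_norm z hznorm m
  have bw := abel_norm w hwnorm m
  rw [hwd] at bw
  have nz : ‖∑ k ∈ Finset.Icc (1:ℤ) (m:ℤ), (k:ℂ) * z ^ k‖ ≤ ((m:ℝ) * d + 2) / d^2 := by
    rw [le_div_iff₀ hd2]; exact bz
  have nw : ‖∑ k ∈ Finset.Icc (1:ℤ) (m:ℤ), (k:ℂ) * w ^ k‖ ≤ ((m:ℝ) * d + 2) / d^2 := by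
    rw [le_div_iff₀ hd2]; exact bw
  calc ‖Complex.I * ((∑ k ∈ Finset.Icc (1:ℤ) (m:ℤ), (k:ℂ) * z ^ k)
          - ∑ k ∈ Finset.Icc (1:ℤ) (m:ℤ), (k:ℂ) * w ^ k)‖
      = ‖(∑ k ∈ Finset.Icc (1:ℤ) (m:ℤ), (k:ℂ) * z ^ k)
          - ∑ k ∈ Finset.Icc (1:ℤ) (m:ℤ), (k:ℂ) * w ^ k‖ := by
        rw [norm_mul, Complex.norm_I, one_mul]
    _ ≤ ‖∑ k ∈ Finset.Icc (1:ℤ) (m:ℤ), (k:ℂ) * z ^ k‖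
          + ‖∑ k ∈ Finset.Icc (1:ℤ) (m:ℤ), (k:ℂ) * w ^ k‖ := norm_sub_le _ _
    _ ≤ ((m:ℝ) * d + 2) / d^2 + ((m:ℝ) * d + 2) / d^2 := add_le_add nz nw
    _ = 2 * ((m:ℝ) * d + 2) / d^2 := by ring

lemma norm_exp_I_sub_one (θ : ℝ) (h0 : 0 ≤ θ) (h2 : θ ≤ 2*Real.pi) :
    ‖Complex.exp (Complex.I * (θ:ℂ)) - 1‖ = 2 * Real.sin (θ/2) := by
  have hre : (Complex.exp (Complex.I * (θ:ℂ)) - 1).re = Real.cos θ - 1 := by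
    rw [mul_comm]
    simp [Complex.exp_ofReal_mul_I_re]
  have him : (Complex.exp (Complex.I * (θ:ℂ)) - 1).im = Real.sin θ := by
    rw [mul_comm]
    simp [Complex.exp_ofReal_mul_I_im]
  have hnorm : ‖Complex.exp (Complex.I * (θ:ℂ)) - 1‖
      = Real.sqrt ((Real.cos θ - 1)^2 + (Real.sin θ)^2) := by
    rw [Complex.norm_def, Complex.normSq_apply, hre, him]
    ring_nf
  rw [hnorm]
  have hs : (Real.cos θ - 1)^2 + (Real.sin θ)^2 = (2 * Real.sin (θ/2))^2 := by
    have h1 : Real.sin (θ/2) ^ 2 = 1/2 - Real.cos (2 * (θ/2)) / 2 := Real.sin_sq_eq_half_sub (θ/2)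
    have h2 : Real.sin θ ^ 2 = 1 - Real.cos θ ^ 2 := Real.sin_sq θ
    rw [show 2 * (θ/2) = θ by ring] at h1
    nlinarith [h1, h2]
  have hsin : 0 ≤ Real.sin (θ/2) :=
    Real.sin_nonneg_of_nonneg_of_le_pi (by linarith) (by linarith)
  rw [hs, Real.sqrt_sq (by linarith)]

lemma d_lower (θ : ℝ) (h0 : 0 ≤ θ) (h2 : θ ≤ 2*Real.pi) :
    2 * (min θ (2*Real.pi - θ)) / Real.pi ≤ ‖Complex.exp (Complex.I * (θ:ℂ)) - 1‖ := by
  rw [norm_exp_I_sub_one θ h0 h2]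
  have hπ := Real.pi_pos
  set s := min θ (2*Real.pi - θ) with hsdef
  have hs1 : s ≤ θ := min_le_left _ _
  have hs2 : s ≤ 2*Real.pi - θ := min_le_right _ _
  have hs0 : 0 ≤ s := le_min h0 (by linarith)
  have hsπ : s ≤ Real.pi := by linarith
  have hsin : s / Real.pi ≤ Real.sin (θ/2) := by
    have key : Real.sin (s/2) = Real.sin (θ/2) := by
      rcases le_total θ Real.pi with h | h
      · rw [hsdef, min_eq_left (by linarith)]
      · rw [hsdef, min_eq_right (by linarith),
          show (2*Real.pi - θ)/2 = Real.pi - θ/2 by ring, Real.sin_pi_sub]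
    rw [← key]
    have hj := Real.mul_le_sin (x := s/2) (by linarith) (by linarith)
    calc s/Real.pi = 2/Real.pi * (s/2) := by field_simp
      _ ≤ Real.sin (s/2) := hj
  calc 2*s/Real.pi = 2*(s/Real.pi) := by ring
    _ ≤ 2*Real.sin (θ/2) := by linarith

lemma dirK_deriv_main (n m : ℕ) (h1 : (n-1)/2 = m) (h2 : n/2 = m) (hm : 1 ≤ m)
    (θ t : ℝ) (ht : 0 < t) (htm : 1 ≤ (m:ℝ) * t)
    (hd : 2*t/Real.pi ≤ ‖Complex.exp (Complex.I * (θ:ℂ)) - 1‖) :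
    ‖deriv (DirK n) θ‖ ≤ 14 * (m:ℝ) / t := by
  have hπ := Real.pi_pos
  set d := ‖Complex.exp (Complex.I * (θ:ℂ)) - 1‖ with hdd
  have hdpos : 0 < d := lt_of_lt_of_le (by positivity) hd
  have hb := dirK_deriv_refined n m h1 h2 θ hdpos
  have hmr : (0:ℝ) < m := by exact_mod_cast Nat.pos_of_ne_zero (by omega)
  have s1 : 2*(m:ℝ)/d ≤ Real.pi*m/t := by
    calc 2*(m:ℝ)/d ≤ 2*(m:ℝ)/(2*t/Real.pi) :=
          div_le_div_of_nonneg_left (by positivity) (by positivity) hd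
      _ = Real.pi*m/t := by field_simp
  have s2 : (4:ℝ)/d^2 ≤ Real.pi^2*m/t := by
    have b1 : (2*t/Real.pi)^2 ≤ d^2 := pow_le_pow_left₀ (by positivity) hd 2
    calc (4:ℝ)/d^2 ≤ 4/((2*t/Real.pi)^2) :=
          div_le_div_of_nonneg_left (by norm_num) (by positivity) b1
      _ = Real.pi^2/t^2 := by field_simp; ring
      _ ≤ Real.pi^2*m/t := by
          rw [div_le_div_iff₀ (by positivity) ht]
          nlinarith [mul_le_mul_of_nonneg_left htm (mul_nonneg (sq_nonneg Real.pi) ht.le)]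
  have e0 : 2*((m:ℝ)*d+2)/d^2 = 2*(m:ℝ)/d + 4/d^2 := by field_simp; ring
  have pi14 : Real.pi + Real.pi^2 ≤ 14 := by nlinarith [Real.pi_lt_d2, Real.pi_pos]
  calc ‖deriv (DirK n) θ‖ ≤ 2*((m:ℝ)*d+2)/d^2 := hb
    _ = 2*(m:ℝ)/d + 4/d^2 := e0
    _ ≤ Real.pi*m/t + Real.pi^2*m/t := add_le_add s1 s2
    _ = (Real.pi + Real.pi^2) * ((m:ℝ)/t) := by ring
    _ ≤ 14 * ((m:ℝ)/t) := mul_le_mul_of_nonneg_right pi14 (by positivity)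
    _ = 14 * (m:ℝ) / t := by ring

/-- **Localized `L^p` bound for the derivative of the Dirichlet kernel.** For
`1 < p < ∞` there is a constant `C_p` such that for every odd `n > 1` and every
`0 ≤ ε ≤ π n₋`,
`‖D_n′‖_{L^p(ε/n₋, 2π − ε/n₋)} ≤ C_p (1+ε) (n₋/(1+ε))^{2−1/p}`. -/
theorem dirichlet_kernel_deriv_localized_Lp (p : ℝ) (hp : 1 < p) :
    ∃ C : ℝ, 0 < C ∧ ∀ n : ℕ, 1 < n → Odd n → ∀ ε : ℝ,
      0 ≤ ε → ε ≤ Real.pi * (((n - 1) / 2 : ℕ) : ℝ) →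
      (∫ θ in (ε / (((n - 1) / 2 : ℕ) : ℝ))..(2 * Real.pi - ε / (((n - 1) / 2 : ℕ) : ℝ)),
          ‖deriv (DirK n) θ‖ ^ p) ^ (1 / p)
        ≤ C * (1 + ε) * ((((n - 1) / 2 : ℕ) : ℝ) / (1 + ε)) ^ (2 - 1 / p) := by
  have hp0 : (0:ℝ) < p := by linarith
  set K : ℝ := 2 * ((14/3) * (3:ℝ)^p * ((17:ℝ)/3)^(p-1)) + 2 * ((14:ℝ)^p * (2:ℝ)^(p-1) / (p-1))
    with hKdef
  have hKpos : 0 < K := by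
    have a1 : (0:ℝ) < (3:ℝ)^p := Real.rpow_pos_of_pos (by norm_num) _
    have a2 : (0:ℝ) < ((17:ℝ)/3)^(p-1) := Real.rpow_pos_of_pos (by norm_num) _
    have a3 : (0:ℝ) < (14:ℝ)^p := Real.rpow_pos_of_pos (by norm_num) _
    have a4 : (0:ℝ) < (2:ℝ)^(p-1) := Real.rpow_pos_of_pos (by norm_num) _
    have : (0:ℝ) < p - 1 := by linarith
    positivity
  refine ⟨K ^ (1/p), Real.rpow_pos_of_pos hKpos _, ?_⟩
  intro n hn hodd ε hε0 hεπ
  obtain ⟨j, hj⟩ := hodd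
  set m : ℕ := (n-1)/2 with hmdef
  have h1 : (n-1)/2 = m := rfl
  have h2 : n/2 = m := by omega
  have hm1 : 1 ≤ m := by omega
  set M : ℝ := (m:ℝ) with hMdef
  have hM1 : 1 ≤ M := by rw [hMdef]; exact_mod_cast hm1
  have hM0 : 0 < M := by linarith
  have hπ := Real.pi_pos
  set δ : ℝ := ε / M with hδdef
  have hδ0 : 0 ≤ δ := by positivity
  have hδπ : δ ≤ Real.pi := by
    rw [hδdef, div_le_iff₀ hM0]
    calc ε ≤ Real.pi * M := hεπ
      _ = Real.pi * M := rfl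
  set t₀ : ℝ := 14 / (3*M) with ht₀def
  set a : ℝ := max δ (min t₀ Real.pi) with hadef
  have haδ : δ ≤ a := le_max_left _ _
  have haπ : a ≤ Real.pi := max_le hδπ (min_le_right _ _)
  have ha1m : 1/M ≤ a := by
    refine le_trans (le_min ?_ ?_) (le_max_right _ _)
    · rw [ht₀def, div_le_div_iff₀ hM0 (by positivity)]
      nlinarith
    · calc 1/M ≤ 1 := by rw [div_le_one hM0]; exact hM1
        _ ≤ Real.pi := by linarith [Real.pi_gt_three]
  have ha0 : 0 < a := lt_of_lt_of_le (by positivity) ha1m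
  have haε : (1+ε)/(2*M) ≤ a := by
    rw [div_le_iff₀ (by positivity)]
    have e1 : 1 ≤ a * M := by
      have h' := ha1m
      rw [div_le_iff₀ hM0] at h'
      linarith
    have e2 : ε ≤ a * M := by
      have h' : ε / M ≤ a := hδdef ▸ haδ
      rw [div_le_iff₀ hM0] at h'
      linarith
    nlinarith
  have hcase : a = δ ∨ 1 + ε ≤ 17/3 := by
    rcases le_or_gt (min t₀ Real.pi) δ with h | h
    · left; rw [hadef, max_eq_left h]
    · right
      have h3 : δ < t₀ := lt_of_lt_of_le h (min_le_left _ _)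
      have : ε < 14/3 := by
        rw [hδdef, ht₀def] at h3
        rw [div_lt_div_iff₀ hM0 (by positivity)] at h3
        nlinarith
      linarith
  -- continuity and integrability
  have hderiv_cont : Continuous (deriv (DirK n)) := by
    have : deriv (DirK n) = fun θ : ℝ =>
        ∑ k ∈ Finset.Icc (-(((n - 1) / 2 : ℕ) : ℤ)) ((n / 2 : ℕ) : ℤ),
          (Complex.I * (k:ℂ)) * Complex.exp (Complex.I * (k:ℂ) * (θ:ℂ)) :=
      funext fun θ => dirK_deriv n θ
    rw [this]
    refine continuous_finset_sum _ (fun k _ => ?_)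
    fun_prop
  set g : ℝ → ℝ := fun θ => ‖deriv (DirK n) θ‖ ^ p with hgdef
  have hgcont : Continuous g :=
    (hderiv_cont.norm).rpow_const (fun x => Or.inr hp0.le)
  have hgint : ∀ u v : ℝ, IntervalIntegrable g MeasureTheory.volume u v :=
    fun u v => hgcont.intervalIntegrable u v
  have hg0 : ∀ θ, 0 ≤ g θ := fun θ => Real.rpow_nonneg (norm_nonneg _) p
  -- the split
  have hsplit : ∫ θ in δ..(2*Real.pi - δ), g θ
      = (∫ θ in δ..a, g θ) + ((∫ θ in a..Real.pi, g θ)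
        + ((∫ θ in Real.pi..(2*Real.pi - a), g θ)
          + (∫ θ in (2*Real.pi - a)..(2*Real.pi - δ), g θ))) := by
    rw [intervalIntegral.integral_add_adjacent_intervals (hgint Real.pi (2*Real.pi - a))
        (hgint (2*Real.pi - a) (2*Real.pi - δ)),
      intervalIntegral.integral_add_adjacent_intervals (hgint a Real.pi)
        (hgint Real.pi (2*Real.pi - δ)),
      intervalIntegral.integral_add_adjacent_intervals (hgint δ a)
        (hgint a (2*Real.pi - δ))]
  -- crude pieces
  have hB1 : ∫ θ in δ..a, g θ ≤ (a - δ) * (3*M^2)^p := by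
    have := intervalIntegral.integral_mono_on (μ := MeasureTheory.volume) haδ (hgint δ a)
      (intervalIntegrable_const (c := (3*M^2)^p))
      (fun θ hθ => Real.rpow_le_rpow (norm_nonneg _) (dirK_deriv_crude n m h1 h2 θ) hp0.le)
    simpa [smul_eq_mul] using this
  have hB4 : ∫ θ in (2*Real.pi - a)..(2*Real.pi - δ), g θ ≤ (a - δ) * (3*M^2)^p := by
    have h' : 2*Real.pi - a ≤ 2*Real.pi - δ := by linarith
    have := intervalIntegral.integral_mono_on (μ := MeasureTheory.volume) h'
      (hgint _ _) (intervalIntegrable_const (c := (3*M^2)^p))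
      (fun θ hθ => Real.rpow_le_rpow (norm_nonneg _) (dirK_deriv_crude n m h1 h2 θ) hp0.le)
    calc ∫ θ in (2*Real.pi - a)..(2*Real.pi - δ), g θ
        ≤ ((2*Real.pi - δ) - (2*Real.pi - a)) * (3*M^2)^p := by simpa [smul_eq_mul] using this
      _ = (a - δ) * (3*M^2)^p := by ring_nf
  -- refined piece on [a, π]
  have hB2 : ∫ θ in a..Real.pi, g θ ≤ (14*M)^p * (a^(1-p) / (p-1)) := by
    have hptw : ∀ θ ∈ Set.Icc a Real.pi, g θ ≤ (14*M)^p * θ^(-p) := by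
      intro θ hθ
      have hθ0 : 0 < θ := lt_of_lt_of_le ha0 hθ.1
      have htm : 1 ≤ M * θ := by
        have : 1/M ≤ θ := le_trans ha1m hθ.1
        rw [div_le_iff₀ hM0] at this
        nlinarith
      have hd : 2*θ/Real.pi ≤ ‖Complex.exp (Complex.I * (θ:ℂ)) - 1‖ := by
        have := d_lower θ hθ0.le (by linarith [hθ.2])
        rwa [min_eq_left (by linarith [hθ.2])] at this
      have hbd := dirK_deriv_main n m h1 h2 hm1 θ θ hθ0 htm hd
      have : g θ ≤ (14*M/θ)^p := Real.rpow_le_rpow (norm_nonneg _) hbd hp0.le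
      calc g θ ≤ (14*M/θ)^p := this
        _ = (14*M)^p * θ^(-p) := by
            rw [Real.div_rpow (by positivity) hθ0.le, Real.rpow_neg hθ0.le, div_eq_mul_inv]
    have hint2 : IntervalIntegrable (fun θ : ℝ => (14*M)^p * θ^(-p))
        MeasureTheory.volume a Real.pi := by
      apply ContinuousOn.intervalIntegrable
      apply ContinuousOn.mul continuousOn_const
      apply ContinuousOn.rpow_const continuousOn_id
      intro x hx
      rw [Set.uIcc_of_le haπ] at hx
      exact Or.inl (ne_of_gt (lt_of_lt_of_le ha0 hx.1))
    have hmono := intervalIntegral.integral_mono_on (μ := MeasureTheory.volume) haπ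
      (hgint a Real.pi) hint2 hptw
    have hval : ∫ θ in a..Real.pi, (14*M)^p * θ^(-p)
        = (14*M)^p * ((Real.pi^(-p+1) - a^(-p+1)) / (-p+1)) := by
      rw [intervalIntegral.integral_const_mul, integral_rpow]
      right
      constructor
      · intro hcon; rw [neg_eq_iff_eq_neg] at hcon; linarith [hcon]
      · rw [Set.uIcc_of_le haπ]
        intro hmem
        exact absurd hmem.1 (not_le.mpr ha0)
    have hfin : (Real.pi^(-p+1) - a^(-p+1)) / (-p+1) ≤ a^(1-p) / (p-1) := by
      have hπpow : 0 < Real.pi^(-p+1) := Real.rpow_pos_of_pos hπ _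
      have he : (Real.pi^(-p+1) - a^(-p+1)) / (-p+1) = (a^(1-p) - Real.pi^(1-p)) / (p-1) := by
        rw [show (-p+1 : ℝ) = 1-p by ring]
        rw [div_eq_div_iff (by linarith : (1:ℝ)-p ≠ 0) (by linarith : p-(1:ℝ) ≠ 0)]
        ring
      rw [he]
      have hπpow2 : 0 < Real.pi^(1-p) := Real.rpow_pos_of_pos hπ _
      have hp1 : (0:ℝ) < p - 1 := by linarith
      exact (div_le_div_iff_of_pos_right hp1).mpr (by linarith)
    calc ∫ θ in a..Real.pi, g θ ≤ ∫ θ in a..Real.pi, (14*M)^p * θ^(-p) := hmono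
      _ = (14*M)^p * ((Real.pi^(-p+1) - a^(-p+1)) / (-p+1)) := hval
      _ ≤ (14*M)^p * (a^(1-p) / (p-1)) := by
          apply mul_le_mul_of_nonneg_left hfin (by positivity)
  -- refined piece on [π, 2π - a]
  have hB3 : ∫ θ in Real.pi..(2*Real.pi - a), g θ ≤ (14*M)^p * (a^(1-p) / (p-1)) := by
    have hle : Real.pi ≤ 2*Real.pi - a := by linarith
    have hptw : ∀ θ ∈ Set.Icc Real.pi (2*Real.pi - a),
        g θ ≤ (14*M)^p * (2*Real.pi - θ)^(-p) := by
      intro θ hθ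
      have ht : 0 < 2*Real.pi - θ := lt_of_lt_of_le ha0 (by linarith [hθ.2])
      have htm : 1 ≤ M * (2*Real.pi - θ) := by
        have h' : 1/M ≤ 2*Real.pi - θ := le_trans ha1m (by linarith [hθ.2])
        rw [div_le_iff₀ hM0] at h'
        linarith
      have hd : 2*(2*Real.pi - θ)/Real.pi ≤ ‖Complex.exp (Complex.I * (θ:ℂ)) - 1‖ := by
        have := d_lower θ (by linarith [hθ.1]) (by linarith [hθ.2, ha0])
        rwa [min_eq_right (by linarith [hθ.1])] at this
      have hbd := dirK_deriv_main n m h1 h2 hm1 θ (2*Real.pi - θ) ht htm hd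
      calc g θ ≤ (14*M/(2*Real.pi - θ))^p :=
            Real.rpow_le_rpow (norm_nonneg _) hbd hp0.le
        _ = (14*M)^p * (2*Real.pi - θ)^(-p) := by
            rw [Real.div_rpow (by positivity) ht.le, Real.rpow_neg ht.le, div_eq_mul_inv]
    have hint3 : IntervalIntegrable (fun θ : ℝ => (14*M)^p * (2*Real.pi - θ)^(-p))
        MeasureTheory.volume Real.pi (2*Real.pi - a) := by
      apply ContinuousOn.intervalIntegrable
      apply ContinuousOn.mul continuousOn_const
      apply ContinuousOn.rpow_const (by fun_prop)
      intro x hx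
      rw [Set.uIcc_of_le hle] at hx
      exact Or.inl (ne_of_gt (lt_of_lt_of_le ha0 (by linarith [hx.2])))
    have hmono := intervalIntegral.integral_mono_on (μ := MeasureTheory.volume) hle
      (hgint Real.pi (2*Real.pi - a)) hint3 hptw
    have hval : ∫ θ in Real.pi..(2*Real.pi - a), (14*M)^p * (2*Real.pi - θ)^(-p)
        = (14*M)^p * ((Real.pi^(-p+1) - a^(-p+1)) / (-p+1)) := by
      rw [intervalIntegral.integral_const_mul]
      have hcv := intervalIntegral.integral_comp_sub_left (a := Real.pi)
        (b := 2*Real.pi - a) (fun x : ℝ => x^(-p)) (2*Real.pi)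
      rw [show 2*Real.pi - (2*Real.pi - a) = a by ring,
        show 2*Real.pi - Real.pi = Real.pi by ring] at hcv
      rw [hcv, integral_rpow]
      right
      constructor
      · intro hcon; rw [neg_eq_iff_eq_neg] at hcon; linarith [hcon]
      · rw [Set.uIcc_of_le haπ]
        intro hmem
        exact absurd hmem.1 (not_le.mpr ha0)
    have hfin : (Real.pi^(-p+1) - a^(-p+1)) / (-p+1) ≤ a^(1-p) / (p-1) := by
      have he : (Real.pi^(-p+1) - a^(-p+1)) / (-p+1) = (a^(1-p) - Real.pi^(1-p)) / (p-1) := by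
        rw [show (-p+1 : ℝ) = 1-p by ring]
        rw [div_eq_div_iff (by linarith : (1:ℝ)-p ≠ 0) (by linarith : p-(1:ℝ) ≠ 0)]
        ring
      rw [he]
      have hπpow2 : 0 < Real.pi^(1-p) := Real.rpow_pos_of_pos hπ _
      have hp1 : (0:ℝ) < p - 1 := by linarith
      exact (div_le_div_iff_of_pos_right hp1).mpr (by linarith)
    calc ∫ θ in Real.pi..(2*Real.pi - a), g θ
        ≤ ∫ θ in Real.pi..(2*Real.pi - a), (14*M)^p * (2*Real.pi - θ)^(-p) := hmono
      _ = (14*M)^p * ((Real.pi^(-p+1) - a^(-p+1)) / (-p+1)) := hval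
      _ ≤ (14*M)^p * (a^(1-p) / (p-1)) := mul_le_mul_of_nonneg_left hfin (by positivity)
  -- comparison of the two kinds of bounds with the target quantity
  have hε1 : (0:ℝ) < 1 + ε := by linarith
  have hE1 : (a - δ) * (3*M^2)^p
      ≤ (14/3) * (3:ℝ)^p * ((17:ℝ)/3)^(p-1) * (M^(2*p-1) * (1+ε)^(1-p)) := by
    rcases hcase with hc | hc
    · rw [hc, sub_self, zero_mul]
      positivity
    · have haminus : a - δ ≤ 14/(3*M) := by
        have h' : a ≤ δ + t₀ := by
          rw [hadef]
          apply max_le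
          · have : 0 < t₀ := by rw [ht₀def]; positivity
            linarith
          · have : min t₀ Real.pi ≤ t₀ := min_le_left _ _
            linarith
        rw [ht₀def] at h'
        linarith
      have h3M : (3*M^2)^p = 3^p * M^(2*p) := by
        rw [Real.mul_rpow (by norm_num) (by positivity), ← Real.rpow_natCast M 2,
          ← Real.rpow_mul hM0.le]
        norm_num
      have hone : (1:ℝ) ≤ ((17:ℝ)/3)^(p-1) * (1+ε)^(1-p) := by
        have hup : (1+ε)^(p-1) ≤ ((17:ℝ)/3)^(p-1) :=
          Real.rpow_le_rpow (by linarith) hc (by linarith)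
        have hid : (1+ε)^(p-1) * (1+ε)^(1-p) = 1 := by
          rw [← Real.rpow_add hε1, show (p-1) + (1-p) = 0 by ring, Real.rpow_zero]
        calc (1:ℝ) = (1+ε)^(p-1) * (1+ε)^(1-p) := hid.symm
          _ ≤ ((17:ℝ)/3)^(p-1) * (1+ε)^(1-p) :=
              mul_le_mul_of_nonneg_right hup (Real.rpow_nonneg hε1.le _)
      have hM2p1 : M^(2*p)/M = M^(2*p-1) := by
        rw [Real.rpow_sub hM0, Real.rpow_one]
      calc (a - δ) * (3*M^2)^p ≤ (14/(3*M)) * (3^p * M^(2*p)) := by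
            rw [h3M]
            exact mul_le_mul_of_nonneg_right haminus (by positivity)
        _ = (14/3) * 3^p * M^(2*p-1) := by
            rw [← hM2p1]; field_simp
        _ = (14/3) * 3^p * M^(2*p-1) * 1 := by ring
        _ ≤ (14/3) * 3^p * M^(2*p-1) * (((17:ℝ)/3)^(p-1) * (1+ε)^(1-p)) := by
            apply mul_le_mul_of_nonneg_left hone
            positivity
        _ = (14/3) * (3:ℝ)^p * ((17:ℝ)/3)^(p-1) * (M^(2*p-1) * (1+ε)^(1-p)) := by ring
  have hE2 : (14*M)^p * (a^(1-p) / (p-1))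
      ≤ (14:ℝ)^p * (2:ℝ)^(p-1) / (p-1) * (M^(2*p-1) * (1+ε)^(1-p)) := by
    have ha1p : a^(1-p) ≤ 2^(p-1) * M^(p-1) * (1+ε)^(1-p) := by
      have h0' : (0:ℝ) < (1+ε)/(2*M) := by positivity
      have hA := Real.rpow_le_rpow_of_nonpos h0' haε (by linarith : 1-p ≤ 0)
      have h2 : ((1+ε)/(2*M))^(1-p) = (1+ε)^(1-p) / (2*M)^(1-p) :=
        Real.div_rpow hε1.le (by positivity) (1-p)
      have h3 : ((2*M)^(1-p))⁻¹ = (2*M)^(p-1) := by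
        rw [← Real.rpow_neg (by positivity : (0:ℝ) ≤ 2*M) (1-p),
          show -(1-p) = p-1 by ring]
      have h4 : (2*M)^(p-1) = 2^(p-1)*M^(p-1) := Real.mul_rpow (by norm_num) hM0.le
      calc a^(1-p) ≤ ((1+ε)/(2*M))^(1-p) := hA
        _ = (1+ε)^(1-p) * (2*M)^(p-1) := by rw [h2, div_eq_mul_inv, h3]
        _ = 2^(p-1) * M^(p-1) * (1+ε)^(1-p) := by rw [h4]; ring
    have h14 : (14*M)^p = 14^p * M^p := Real.mul_rpow (by norm_num) hM0.le
    have hMM : M^p * M^(p-1) = M^(2*p-1) := by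
      rw [← Real.rpow_add hM0, show p + (p-1) = 2*p-1 by ring]
    calc (14*M)^p * (a^(1-p)/(p-1))
        ≤ (14*M)^p * ((2^(p-1) * M^(p-1) * (1+ε)^(1-p))/(p-1)) := by
          apply mul_le_mul_of_nonneg_left _ (by positivity)
          exact (div_le_div_iff_of_pos_right (by linarith)).mpr ha1p
      _ = (14:ℝ)^p * (2:ℝ)^(p-1) / (p-1) * ((M^p * M^(p-1)) * (1+ε)^(1-p)) := by
          rw [h14]; ring
      _ = (14:ℝ)^p * (2:ℝ)^(p-1) / (p-1) * (M^(2*p-1) * (1+ε)^(1-p)) := by rw [hMM]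
  -- total bound
  have htot : ∫ θ in δ..(2*Real.pi - δ), g θ ≤ K * (M^(2*p-1) * (1+ε)^(1-p)) := by
    rw [hsplit, hKdef]
    have := hB1
    have := hB2
    have := hB3
    have := hB4
    nlinarith [hE1, hE2, hB1, hB2, hB3, hB4]
  have hInn : 0 ≤ ∫ θ in δ..(2*Real.pi - δ), g θ :=
    intervalIntegral.integral_nonneg (by linarith : δ ≤ 2*Real.pi - δ) (fun u _ => hg0 u)
  have hstep := Real.rpow_le_rpow hInn htot (by positivity : (0:ℝ) ≤ 1/p)
  have hre : (K * (M^(2*p-1) * (1+ε)^(1-p)))^(1/p)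
      = K^(1/p) * (1+ε) * (M/(1+ε))^(2-1/p) := by
    have hKnn : (0:ℝ) ≤ K := hKpos.le
    rw [Real.mul_rpow hKnn (by positivity),
      Real.mul_rpow (Real.rpow_nonneg hM0.le _) (Real.rpow_nonneg hε1.le _),
      ← Real.rpow_mul hM0.le, ← Real.rpow_mul hε1.le]
    have ex1 : (2*p-1) * (1/p) = 2 - 1/p := by field_simp; try ring
    have ex2 : (1-p) * (1/p) = 1/p - 1 := by field_simp; try ring
    rw [ex1, ex2]
    have hdiv : (M/(1+ε))^(2-1/p) = M^(2-1/p) / (1+ε)^(2-1/p) :=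
      Real.div_rpow hM0.le hε1.le (2-1/p)
    rw [hdiv]
    have hpow : (1+ε)^(1/p-1) = (1+ε) / (1+ε)^(2-1/p) := by
      rw [eq_div_iff (ne_of_gt (Real.rpow_pos_of_pos hε1 _)),
        ← Real.rpow_add hε1, show (1/p-1) + (2-1/p) = 1 by ring, Real.rpow_one]
    rw [hpow]
    ring
  calc (∫ θ in δ..(2*Real.pi - δ), g θ)^(1/p)
      ≤ (K * (M^(2*p-1) * (1+ε)^(1-p)))^(1/p) := hstep
    _ = K^(1/p) * (1+ε) * (M/(1+ε))^(2-1/p) := hre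
end
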